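/- arXiv:2107.11899 — 3 statements merged into one kernel-verified Lean document; each statement's English description precedes it below -/
import Mathlib

section
/- Let r ≥ 1, let λ be a partition with an empty r-core, and let λ' be obtained from λ by peeling a single ribbon of length r (so that λ' also has an empty r-core). Then the row-color sequence a^(k)(λ') is obtained from a^(k)(λ) by a cyclic shift of a consecutive block of entries a_{i_1},…,a_{i_2}, where i_1,…,i_2 are the indices of the rows meeting the removed ribbon; in particular a^(k)(λ') is a permutation of a^(k)(λ). -/
/-- Boundary sequence of a partition (list of parts, weakly decreasing,
zero parts allowed and give leading `false`s): walk along the SE boundary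
from SW corner to NE corner, `true` = east step, `false` = north step. -/
def bseq : List ℕ → List Bool
  | [] => []
  | a :: s => bseq s ++ List.replicate (a - s.headI) true ++ [false]

/-- A partition: weakly decreasing list of positive integers. -/
def IsPartition (l : List ℕ) : Prop := l.Pairwise (· ≥ ·) ∧ ∀ x ∈ l, 0 < x

/-- The set of cells of the Young diagram (English convention, 0-indexed):
cell `(i, j)` is present iff `j < l_i`. -/
def cellSet (l : List ℕ) : Set (ℕ × ℕ) := {p | p.2 < l.getD p.1 0}

/-- Two cells are adjacent if they share an edge. -/
def CellAdj (p q : ℕ × ℕ) : Prop :=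
  (p.1 = q.1 ∧ (p.2 + 1 = q.2 ∨ q.2 + 1 = p.2)) ∨
  (p.2 = q.2 ∧ (p.1 + 1 = q.1 ∨ q.1 + 1 = p.1))

/-- A set of cells is connected (via edge-adjacency within the set). -/
def ConnSet (S : Set (ℕ × ℕ)) : Prop :=
  ∀ p ∈ S, ∀ q ∈ S, Relation.ReflTransGen (fun a b => b ∈ S ∧ CellAdj a b) p q

/-- A ribbon (border strip) of length `m`: a connected set of `m` cells
containing no 2×2 square. -/
 def IsRibbonSet (S : Set (ℕ × ℕ)) (m : ℕ) : Prop :=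
  S.ncard = m ∧ ConnSet S ∧
  ∀ i j : ℕ, ¬((i, j) ∈ S ∧ (i + 1, j) ∈ S ∧ (i, j + 1) ∈ S ∧ (i + 1, j + 1) ∈ S)

/-- `l'` is obtained from `l` by peeling a ribbon of length `m`. -/
def PeelRibbon (m : ℕ) (l l' : List ℕ) : Prop :=
  IsPartition l' ∧ cellSet l' ⊂ cellSet l ∧ IsRibbonSet (cellSet l \ cellSet l') m

/-- `l` has an empty `r`-core: it can be reduced to the empty partition by
successively peeling ribbons of length `r`. -/
def EmptyCore (r : ℕ) (l : List ℕ) : Prop :=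
  Relation.ReflTransGen (fun x y => PeelRibbon r x y) l []

/-- The row-color sequence `a^(k)(λ)`: `a_i = (ℓ_i + k - i) mod r` (1-indexed),
here 0-indexed as `(l_i + k - i - 1) % r`. -/
def rcs (r k : ℕ) (l : List ℕ) : List ℕ :=
  (List.range k).map (fun i => (l.getD i 0 + k - i - 1) % r)

/-- Inversion number of a word over a linearly ordered alphabet. -/
def invOn {α : Type*} [LinearOrder α] (w : List α) : ℕ :=
  (w.tails.map (fun t => match t with
    | [] => 0
    | a :: s => (s.filter (fun b => decide (b < a))).length)).sum

/-- `m_i` for a 0/1 (false/true) sequence: the number of `true`s among the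
first `i` entries minus the number of `false`s among the remaining entries. -/
def mval (δ : List Bool) (i : ℕ) : ℤ :=
  ((δ.take i).count true : ℤ) - ((δ.drop i).count false : ℤ)

/-- The anchor of a 0/1 sequence is at position `i` (between indices `i` and
`i+1`) iff the number of `true`s before it equals the number of `false`s after it. -/
def AnchorAt (δ : List Bool) (i : ℕ) : Prop :=
  (δ.take i).count true = (δ.drop i).count false

/-- The graph of the map `φ_r`: `IsPhi r Λ l` says that `l = φ_r (Λ 0, …, Λ (r-1))`,
i.e. the boundary sequences of the `Λ j` can be padded with leading `false`s and
trailing `true`s to a common length `t` and a common anchor position `i₀`, and the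
interlaced sequence is a padding of the boundary sequence of `l`. -/
def IsPhi (r : ℕ) (Λ : ℕ → List ℕ) (l : List ℕ) : Prop :=
  ∃ (t i₀ : ℕ) (s : ℕ → List Bool) (p q : ℕ → ℕ),
    (∀ j < r,
      s j = List.replicate (p j) false ++ bseq (Λ j) ++ List.replicate (q j) true ∧
      (s j).length = t ∧ AnchorAt (s j) i₀) ∧
    ∃ P Q : ℕ,
      List.replicate P false ++ bseq l ++ List.replicate Q true =
        (List.range (r * t)).map (fun v => (s (v % r)).getD (v / r) false)

/-- The height of a ribbon: one less than its number of rows. -/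
noncomputable def htOf (S : Set (ℕ × ℕ)) : ℕ := (Prod.fst '' S).ncard - 1



lemma getD_antitone {l : List ℕ} (h : l.Pairwise (· ≥ ·)) {i j : ℕ} (hij : i ≤ j) :
    l.getD j 0 ≤ l.getD i 0 := by
  rcases Nat.lt_or_ge j l.length with hj | hj
  · have hi : i < l.length := lt_of_le_of_lt hij hj
    rw [List.getD_eq_getElem _ _ hj, List.getD_eq_getElem _ _ hi]
    rcases Nat.eq_or_lt_of_le hij with rfl | hlt
    · exact le_refl _
    · exact (List.pairwise_iff_getElem.mp h) i j hi hj hlt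
  · rw [List.getD_eq_default _ _ hj]; exact Nat.zero_le _

lemma lt_length_of_getD_pos {l : List ℕ} {i : ℕ} (h : 0 < l.getD i 0) :
    i < l.length := by
  by_contra hc
  rw [List.getD_eq_default _ _ (Nat.le_of_not_lt hc)] at h
  exact Nat.lt_irrefl 0 h

lemma mem_cellSet {l : List ℕ} {i j : ℕ} : (i, j) ∈ cellSet l ↔ j < l.getD i 0 :=
  Iff.rfl

lemma cellSet_mono {l l' : List ℕ} (h : ∀ i, l'.getD i 0 ≤ l.getD i 0) :
    cellSet l' ⊆ cellSet l := fun p hp => lt_of_lt_of_le hp (h p.1)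

lemma getD_le_of_subset {l l' : List ℕ} (h : cellSet l' ⊆ cellSet l) (i : ℕ) :
    l'.getD i 0 ≤ l.getD i 0 := by
  by_contra hc
  have : (i, l.getD i 0) ∈ cellSet l' := Nat.lt_of_not_le hc
  exact Nat.lt_irrefl _ (h this)

/-- partitions with equal getD's are equal -/
lemma partition_ext : ∀ {l l' : List ℕ}, IsPartition l → IsPartition l' →
    (∀ i, l.getD i 0 = l'.getD i 0) → l = l'
  | [], [], _, _, _ => rfl
  | [], b :: t, _, hp', h => by
    have := h 0
    simp at this
    exact absurd (hp'.2 b (by simp)) (by omega)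
  | a :: t, [], hp, _, h => by
    have := h 0
    simp at this
    exact absurd (hp.2 a (by simp)) (by omega)
  | a :: t, b :: t', hp, hp', h => by
    have h0 := h 0
    simp at h0
    have : t = t' := partition_ext ⟨hp.1.of_cons, fun x hx => hp.2 x (List.mem_cons_of_mem _ hx)⟩
      ⟨hp'.1.of_cons, fun x hx => hp'.2 x (List.mem_cons_of_mem _ hx)⟩
      (fun i => by have := h (i+1); simpa using this)
    rw [h0, this]

/-- cellSet is finite -/
lemma cellSet_finite (l : List ℕ) : (cellSet l).Finite := by
  apply Set.Finite.subset (Set.finite_Iio l.length |>.prod (Set.finite_Iio (l.sum + 1)))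
  rintro ⟨i, j⟩ hp
  have hp' : j < l.getD i 0 := hp
  have h1 : 0 < l.getD i 0 := Nat.lt_of_le_of_lt (Nat.zero_le _) hp'
  have hi : i < l.length := lt_length_of_getD_pos h1
  constructor
  · exact hi
  · have hmem : l.getD i 0 ∈ l := by
      rw [List.getD_eq_getElem _ _ hi]; exact List.getElem_mem _
    have : l.getD i 0 ≤ l.sum := List.single_le_sum (fun x _ => Nat.zero_le x) _ hmem
    exact Nat.lt_of_lt_of_le hp' (by omega)


lemma cellAdj_symm {p q : ℕ × ℕ} (h : CellAdj p q) : CellAdj q p := by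
  unfold CellAdj at *; tauto

lemma path_mem {S : Set (ℕ × ℕ)} {p q : ℕ × ℕ} (hp : p ∈ S)
    (h : Relation.ReflTransGen (fun a b => b ∈ S ∧ CellAdj a b) p q) : q ∈ S := by
  induction h with
  | refl => exact hp
  | tail _ hbc _ => exact hbc.1

lemma path_symm {S : Set (ℕ × ℕ)} {p q : ℕ × ℕ} (hp : p ∈ S)
    (h : Relation.ReflTransGen (fun a b => b ∈ S ∧ CellAdj a b) p q) :
    Relation.ReflTransGen (fun a b => b ∈ S ∧ CellAdj a b) q p := by
  induction h with
  | refl => exact Relation.ReflTransGen.refl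
  | @tail b c hpb hbc ih =>
    have hb : b ∈ S := path_mem hp hpb
    exact Relation.ReflTransGen.head ⟨hb, cellAdj_symm hbc.2⟩ ih

/-- crossing lemma: a path from a row ≤ i to a row > i contains a vertical
step between rows i and i+1. -/
lemma path_cross {S : Set (ℕ × ℕ)} {p q : ℕ × ℕ} {i : ℕ} (hp : p ∈ S)
    (h : Relation.ReflTransGen (fun a b => b ∈ S ∧ CellAdj a b) p q)
    (h1 : p.1 ≤ i) (h2 : i < q.1) :
    ∃ j, (i, j) ∈ S ∧ (i + 1, j) ∈ S := by
  induction h with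
  | refl => omega
  | @tail b c hpb hbc ih =>
    rcases Nat.lt_or_ge i b.1 with hb | hb
    · exact ih hb
    · -- b.1 ≤ i < c.1, adjacency forces vertical step with b.1 = i
      rcases hbc.2 with ⟨he, _⟩ | ⟨he, hv⟩
      · omega
      · have hbi : b.1 = i := by omega
        have hci : c.1 = i + 1 := by omega
        refine ⟨b.2, ?_, ?_⟩
        · have := path_mem hp hpb
          rwa [← hbi, ← (Prod.mk.eta (p := b))]
        · have := hbc.1
          rw [← hci, he, ← (Prod.mk.eta (p := c))]
          exact this


lemma D_mem {l l' : List ℕ} (hsub : cellSet l' ⊆ cellSet l) {i j : ℕ} :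
    (i, j) ∈ cellSet l \ cellSet l' ↔ (l'.getD i 0 ≤ j ∧ j < l.getD i 0) := by
  constructor
  · rintro ⟨h1, h2⟩
    exact ⟨Nat.le_of_not_lt h2, h1⟩
  · rintro ⟨h1, h2⟩
    exact ⟨h2, Nat.not_lt.mpr h1⟩

lemma D_row {l l' : List ℕ} (hsub : cellSet l' ⊆ cellSet l) {i : ℕ} :
    (∃ j, (i, j) ∈ cellSet l \ cellSet l') ↔ l'.getD i 0 < l.getD i 0 := by
  constructor
  · rintro ⟨j, hj⟩
    rw [D_mem hsub] at hj
    omega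
  · intro h
    exact ⟨l'.getD i 0, (D_mem hsub).mpr ⟨le_refl _, h⟩⟩

lemma D_card {l l' : List ℕ} (hsub : cellSet l' ⊆ cellSet l) (i₁ i₂ : ℕ)
    (hrows : ∀ i, (l'.getD i 0 < l.getD i 0) ↔ (i₁ ≤ i ∧ i ≤ i₂)) :
    (cellSet l \ cellSet l').ncard
      = ∑ i ∈ Finset.Icc i₁ i₂, (l.getD i 0 - l'.getD i 0) := by
  classical
  have hD : cellSet l \ cellSet l' =
      ↑((Finset.Icc i₁ i₂).biUnion (fun i =>
        (Finset.Ico (l'.getD i 0) (l.getD i 0)).map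
          ⟨fun j => (i, j), fun a b h => by simpa using h⟩)) := by
    ext ⟨i, j⟩
    simp only [Finset.coe_biUnion, Set.mem_iUnion, Finset.mem_coe, Finset.mem_map,
      Finset.mem_Ico, Finset.mem_Icc, Function.Embedding.coeFn_mk, D_mem hsub]
    constructor
    · rintro ⟨h1, h2⟩
      exact ⟨i, (hrows i).mp (by omega), j, ⟨h1, h2⟩, rfl⟩
    · rintro ⟨i', hi', j', ⟨h1, h2⟩, he⟩
      obtain ⟨rfl, rfl⟩ : i' = i ∧ j' = j := by
        constructor <;> [exact congrArg Prod.fst he; exact congrArg Prod.snd he]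
      exact ⟨h1, h2⟩
  rw [hD, Set.ncard_coe_finset, Finset.card_biUnion]
  · apply Finset.sum_congr rfl
    intro i _
    rw [Finset.card_map, Nat.card_Ico]
  · intro a _ b _ hab
    simp only [Finset.disjoint_left]
    rintro ⟨i, j⟩ h1 h2
    simp only [Finset.mem_map, Finset.mem_Ico, Function.Embedding.coeFn_mk] at h1 h2
    obtain ⟨j1, _, he1⟩ := h1
    obtain ⟨j2, _, he2⟩ := h2
    have e1 : a = i := congrArg Prod.fst he1
    have e2 : b = i := congrArg Prod.fst he2
    exact hab (e1.trans e2.symm)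

lemma sum_telescope {l l' : List ℕ} (hsub : ∀ i, l'.getD i 0 ≤ l.getD i 0)
    {i₁ i₂ : ℕ}
    (hb : ∀ i, i₁ ≤ i → i < i₂ → l'.getD i 0 + 1 = l.getD (i+1) 0) :
    ∀ j, i₁ ≤ j → j ≤ i₂ →
      ((∑ i ∈ Finset.Icc i₁ j, (l.getD i 0 - l'.getD i 0) : ℕ) : ℤ)
        = (l.getD i₁ 0 : ℤ) + j - i₁ - (l'.getD j 0) := by
  intro j hj1 hj2
  induction j, hj1 using Nat.le_induction with
  | base => rw [Finset.Icc_self, Finset.sum_singleton]; push_cast [hsub i₁]; ring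
  | succ n hn ih =>
    have h := hb n hn (by omega)
    have ih' := ih (by omega)
    rw [Finset.sum_Icc_succ_top (by omega)]
    push_cast [hsub (n+1)] at ih' ⊢
    rw [ih']
    push_cast
    omega


def RD (r : ℕ) (l l' : List ℕ) (i₁ i₂ : ℕ) : Prop :=
  i₁ ≤ i₂ ∧
  (∀ i, i < i₁ ∨ i₂ < i → l'.getD i 0 = l.getD i 0) ∧
  (∀ i, i₁ ≤ i → i < i₂ → l'.getD i 0 + 1 = l.getD (i+1) 0) ∧
  l'.getD i₂ 0 < l.getD i₂ 0 ∧
  l'.getD i₂ 0 + i₁ + r = l.getD i₁ 0 + i₂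

lemma peel_rd {r : ℕ} {l l' : List ℕ} (hl : IsPartition l) (hp : PeelRibbon r l l')
    {i₁ i₂ : ℕ}
    (hrows : {i : ℕ | ∃ j, (i, j) ∈ cellSet l \ cellSet l'} = Set.Icc i₁ i₂)
    (hr : 1 ≤ r) : RD r l l' i₁ i₂ := by
  obtain ⟨hl', hss, hcard, hconn, h2x2⟩ := hp
  have hsub : cellSet l' ⊆ cellSet l := hss.subset
  have hle : ∀ i, l'.getD i 0 ≤ l.getD i 0 := getD_le_of_subset hsub
  have hrow : ∀ i, l'.getD i 0 < l.getD i 0 ↔ (i₁ ≤ i ∧ i ≤ i₂) := by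
    intro i
    rw [← D_row hsub]
    have := Set.ext_iff.mp hrows i
    simpa [Set.mem_Icc] using this
  have hne : (cellSet l \ cellSet l').Nonempty := by
    rw [Set.nonempty_iff_ne_empty]
    intro h
    rw [h, Set.ncard_empty] at hcard
    omega
  have h12 : i₁ ≤ i₂ := by
    obtain ⟨⟨i, j⟩, hij⟩ := hne
    have : i₁ ≤ i ∧ i ≤ i₂ := (hrow i).mp (by
      have := (D_mem hsub).mp hij; omega)
    omega
  have hb : ∀ i, i₁ ≤ i → i < i₂ → l'.getD i 0 + 1 = l.getD (i+1) 0 := by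
    intro i hi1 hi2
    have hri : l'.getD i 0 < l.getD i 0 := (hrow i).mpr ⟨hi1, by omega⟩
    have hri' : l'.getD (i+1) 0 < l.getD (i+1) 0 := (hrow (i+1)).mpr ⟨by omega, by omega⟩
    have hsort : l.getD (i+1) 0 ≤ l.getD i 0 := getD_antitone hl.1 (by omega)
    have hsort' : l'.getD (i+1) 0 ≤ l'.getD i 0 := getD_antitone hl'.1 (by omega)
    -- upper bound via no 2x2
    have hup : l.getD (i+1) 0 ≤ l'.getD i 0 + 1 := by
      by_contra hc
      set j := l'.getD i 0 with hj
      apply h2x2 i j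
      refine ⟨(D_mem hsub).mpr ⟨le_refl _, hri⟩,
        (D_mem hsub).mpr ⟨by omega, by omega⟩,
        (D_mem hsub).mpr ⟨by omega, by omega⟩,
        (D_mem hsub).mpr ⟨by omega, by omega⟩⟩
    -- lower bound via connectivity
    have hlo : l'.getD i 0 < l.getD (i+1) 0 := by
      by_contra hc
      have hpD : (i, l'.getD i 0) ∈ cellSet l \ cellSet l' :=
        (D_mem hsub).mpr ⟨le_refl _, hri⟩
      have hqD : (i+1, l'.getD (i+1) 0) ∈ cellSet l \ cellSet l' :=
        (D_mem hsub).mpr ⟨le_refl _, hri'⟩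
      obtain ⟨j, hj1, hj2⟩ := path_cross hpD (hconn _ hpD _ hqD) (le_refl i) (by omega)
      have h1 := (D_mem hsub).mp hj1
      have h2 := (D_mem hsub).mp hj2
      omega
    omega
  have ha : ∀ i, i < i₁ ∨ i₂ < i → l'.getD i 0 = l.getD i 0 := by
    intro i hi
    have := hrow i
    have := hle i
    omega
  have hc : l'.getD i₂ 0 < l.getD i₂ 0 := (hrow i₂).mpr ⟨h12, le_refl _⟩
  have hd : l'.getD i₂ 0 + i₁ + r = l.getD i₁ 0 + i₂ := by
    have hsum := D_card hsub i₁ i₂ hrow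
    have htel := sum_telescope hle hb i₂ h12 (le_refl _)
    rw [hcard] at hsum
    rw [← hsum] at htel
    have h1 : l'.getD i₂ 0 ≤ l.getD i₂ 0 := hle i₂
    omega
  exact ⟨h12, ha, hb, hc, hd⟩

lemma peel_rows_icc {r : ℕ} {l l' : List ℕ} (hl : IsPartition l)
    (hp : PeelRibbon r l l') (hr : 1 ≤ r) :
    ∃ i₁ i₂, {i : ℕ | ∃ j, (i, j) ∈ cellSet l \ cellSet l'} = Set.Icc i₁ i₂ := by
  classical
  obtain ⟨hl', hss, hcard, hconn, h2x2⟩ := hp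
  have hsub : cellSet l' ⊆ cellSet l := hss.subset
  have hne : (cellSet l \ cellSet l').Nonempty := by
    rw [Set.nonempty_iff_ne_empty]
    intro h
    rw [h, Set.ncard_empty] at hcard
    omega
  have hPne : ∃ i, l'.getD i 0 < l.getD i 0 := by
    obtain ⟨⟨i, j⟩, hij⟩ := hne
    exact ⟨i, (D_row hsub).mp ⟨j, hij⟩⟩
  have hbd : ∀ i, l'.getD i 0 < l.getD i 0 → i < l.length := by
    intro i hi
    exact lt_length_of_getD_pos (by omega)
  set P : ℕ → Prop := fun i => l'.getD i 0 < l.getD i 0 with hP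
  set i₁ := Nat.find hPne with hi1
  set i₂ := Nat.findGreatest P l.length with hi2
  have hP1 : P i₁ := Nat.find_spec hPne
  have hP2 : P i₂ := Nat.findGreatest_spec (Nat.le_of_lt (hbd _ hP1)) hP1
  have h12 : i₁ ≤ i₂ := Nat.le_findGreatest (Nat.le_of_lt (hbd _ hP1)) hP1
  refine ⟨i₁, i₂, ?_⟩
  ext i
  simp only [Set.mem_setOf_eq, Set.mem_Icc, D_row hsub]
  constructor
  · intro hi
    exact ⟨Nat.find_min' hPne hi, Nat.le_findGreatest (Nat.le_of_lt (hbd _ hi)) hi⟩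
  · rintro ⟨h1, h2⟩
    rcases Nat.eq_or_lt_of_le h1 with rfl | h1'
    · exact hP1
    · -- i₁ < i ≤ i₂ : use crossing with threshold i - 1
      have hpD : (i₁, l'.getD i₁ 0) ∈ cellSet l \ cellSet l' :=
        (D_mem hsub).mpr ⟨le_refl _, hP1⟩
      have hqD : (i₂, l'.getD i₂ 0) ∈ cellSet l \ cellSet l' :=
        (D_mem hsub).mpr ⟨le_refl _, hP2⟩
      obtain ⟨j, hj1, hj2⟩ := path_cross hpD (hconn _ hpD _ hqD)
        (show i₁ ≤ i - 1 by omega) (show i - 1 < i₂ by omega)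
      have : (i - 1) + 1 = i := by omega
      rw [this] at hj2
      exact (D_row hsub).mp ⟨j, hj2⟩

lemma rd_le {r : ℕ} {l l' : List ℕ} {i₁ i₂ : ℕ} (hl : IsPartition l)
    (h : RD r l l' i₁ i₂) : ∀ i, l'.getD i 0 ≤ l.getD i 0 := by
  obtain ⟨h12, ha, hb, hc, hd⟩ := h
  intro i
  rcases Nat.lt_or_ge i i₁ with hi | hi
  · rw [ha i (Or.inl hi)]
  rcases Nat.lt_or_ge i i₂ with hi' | hi'
  · have := hb i hi hi'
    have := getD_antitone hl.1 (show i ≤ i + 1 by omega)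
    omega
  rcases Nat.eq_or_lt_of_le hi' with rfl | hi''
  · omega
  · rw [ha i (Or.inr hi'')]

lemma rd_row {r : ℕ} {l l' : List ℕ} {i₁ i₂ : ℕ} (hl : IsPartition l)
    (h : RD r l l' i₁ i₂) :
    ∀ i, l'.getD i 0 < l.getD i 0 ↔ (i₁ ≤ i ∧ i ≤ i₂) := by
  obtain ⟨h12, ha, hb, hc, hd⟩ := h
  intro i
  constructor
  · intro hi
    by_contra hcon
    have : i < i₁ ∨ i₂ < i := by omega
    have := ha i this
    omega
  · rintro ⟨h1, h2⟩
    rcases Nat.lt_or_ge i i₂ with hi' | hi'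
    · have := hb i h1 hi'
      have := getD_antitone hl.1 (show i ≤ i + 1 by omega)
      omega
    · have : i = i₂ := by omega
      subst this
      exact hc

lemma rd_peel {r : ℕ} {l l' : List ℕ} {i₁ i₂ : ℕ} (hl : IsPartition l)
    (hl' : IsPartition l') (hr : 1 ≤ r) (h : RD r l l' i₁ i₂) :
    PeelRibbon r l l' := by
  have hle := rd_le hl h
  have hrow := rd_row hl h
  obtain ⟨h12, ha, hb, hc, hd⟩ := h
  have hsub : cellSet l' ⊆ cellSet l := cellSet_mono hle
  set S := cellSet l \ cellSet l' with hS
  -- rows i₁..i₂ have nonempty intervals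
  have hssub : cellSet l' ⊂ cellSet l := by
    refine ⟨hsub, fun hcon => ?_⟩
    have : (i₂, l'.getD i₂ 0) ∈ cellSet l := hc
    have := hcon this
    exact absurd (mem_cellSet.mp this) (by omega)
  -- connectivity pieces
  have hrowpath : ∀ i j j', l'.getD i 0 ≤ j → j ≤ j' → j' < l.getD i 0 →
      Relation.ReflTransGen (fun a b => b ∈ S ∧ CellAdj a b) (i, j') (i, j) := by
    intro i j j' hj hjj' hj'
    induction j', hjj' using Nat.le_induction with
    | base => exact Relation.ReflTransGen.refl
    | succ n hn ih =>
      refine Relation.ReflTransGen.head ?_ (ih (by omega))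
      refine ⟨(D_mem hsub).mpr ⟨by omega, by omega⟩, Or.inl ⟨rfl, Or.inr rfl⟩⟩
  have hdown : ∀ i, i₁ ≤ i → i < i₂ →
      Relation.ReflTransGen (fun a b => b ∈ S ∧ CellAdj a b)
        (i, l'.getD i 0) (i + 1, l'.getD (i+1) 0) := by
    intro i hi1 hi2
    have hbi := hb i hi1 hi2
    have hsort' : l'.getD (i+1) 0 ≤ l'.getD i 0 := getD_antitone hl'.1 (by omega)
    refine Relation.ReflTransGen.head (b := (i + 1, l'.getD i 0)) ?_ ?_
    · exact ⟨(D_mem hsub).mpr ⟨hsort', by omega⟩, Or.inr ⟨rfl, Or.inl rfl⟩⟩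
    · exact hrowpath (i+1) (l'.getD (i+1) 0) (l'.getD i 0) (le_refl _) hsort' (by omega)
  have hcorner : ∀ d i, i₂ - i = d → i₁ ≤ i → i ≤ i₂ →
      Relation.ReflTransGen (fun a b => b ∈ S ∧ CellAdj a b)
        (i, l'.getD i 0) (i₂, l'.getD i₂ 0) := by
    intro d
    induction d with
    | zero =>
      intro i hd h1 h2
      have : i = i₂ := by omega
      subst this
      exact Relation.ReflTransGen.refl
    | succ n ih =>
      intro i hd h1 h2
      have hi2 : i < i₂ := by omega
      exact Relation.ReflTransGen.trans (hdown i h1 hi2)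
        (ih (i+1) (by omega) (by omega) (by omega))
  have hconn : ConnSet S := by
    rintro ⟨i, j⟩ hp ⟨i', j'⟩ hq
    have hp' := (D_mem hsub).mp hp
    have hq' := (D_mem hsub).mp hq
    have hpi : i₁ ≤ i ∧ i ≤ i₂ := (hrow i).mp (by omega)
    have hqi : i₁ ≤ i' ∧ i' ≤ i₂ := (hrow i').mp (by omega)
    have p1 : Relation.ReflTransGen (fun a b => b ∈ S ∧ CellAdj a b)
        (i, j) (i₂, l'.getD i₂ 0) :=
      Relation.ReflTransGen.trans
        (hrowpath i (l'.getD i 0) j (le_refl _) hp'.1 hp'.2)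
        (hcorner (i₂ - i) i rfl hpi.1 hpi.2)
    have q1 : Relation.ReflTransGen (fun a b => b ∈ S ∧ CellAdj a b)
        (i', j') (i₂, l'.getD i₂ 0) :=
      Relation.ReflTransGen.trans
        (hrowpath i' (l'.getD i' 0) j' (le_refl _) hq'.1 hq'.2)
        (hcorner (i₂ - i') i' rfl hqi.1 hqi.2)
    exact Relation.ReflTransGen.trans p1 (path_symm hq q1)
  -- cardinality
  have hcard : S.ncard = r := by
    rw [hS, D_card hsub i₁ i₂ hrow]
    have htel := sum_telescope hle hb i₂ h12 (le_refl _)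
    omega
  -- no 2x2
  refine ⟨hl', hssub, hcard, hconn, ?_⟩
  intro i j hcon
  obtain ⟨c1, c2, c3, c4⟩ := hcon
  have d1 := (D_mem hsub).mp c1
  have d4 := (D_mem hsub).mp c4
  have hri : i₁ ≤ i ∧ i ≤ i₂ := (hrow i).mp (by omega)
  have hri' : i₁ ≤ i + 1 ∧ i + 1 ≤ i₂ := (hrow (i+1)).mp (by
    have := (D_mem hsub).mp c2; omega)
  have hbi := hb i hri.1 (by omega)
  omega

def beta (l : List ℕ) (i : ℕ) : ℤ := (l.getD i 0 : ℤ) - i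

def bset (l : List ℕ) : Set ℤ := Set.range (beta l)

lemma beta_strictAnti {l : List ℕ} (hl : l.Pairwise (· ≥ ·)) : StrictAnti (beta l) := by
  intro i j hij
  have := getD_antitone hl (Nat.le_of_lt hij)
  unfold beta
  have : (l.getD j 0 : ℤ) ≤ l.getD i 0 := by exact_mod_cast this
  omega

lemma beta_of_ge_length {l : List ℕ} {i : ℕ} (h : l.length ≤ i) : beta l i = -i := by
  unfold beta
  rw [List.getD_eq_default _ _ h]
  simp

lemma not_mem_bset_of_between {l : List ℕ} (hl : l.Pairwise (· ≥ ·)) {i : ℕ} {z : ℤ}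
    (h1 : beta l (i+1) < z) (h2 : z < beta l i) : z ∉ bset l := by
  rintro ⟨m, rfl⟩
  rcases Nat.lt_or_ge m (i+1) with hm | hm
  · have : beta l i ≤ beta l m := (beta_strictAnti hl).antitone (by omega)
    omega
  · have : beta l m ≤ beta l (i+1) := (beta_strictAnti hl).antitone hm
    omega

lemma strictAnti_ext {u v : ℕ → ℤ} (hu : StrictAnti u) (hv : StrictAnti v)
    (h : Set.range u = Set.range v) : ∀ n, u n = v n := by
  intro n
  induction n using Nat.strong_induction_on with
  | _ n ih =>
    have h1 : v n ≤ u n := by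
      have : v n ∈ Set.range u := h ▸ Set.mem_range_self n
      obtain ⟨m, hm⟩ := this
      rcases Nat.lt_or_ge m n with hmn | hmn
      · exfalso
        have := ih m hmn
        have := hv hmn
        omega
      · have : u m ≤ u n := hu.antitone hmn
        omega
    have h2 : u n ≤ v n := by
      have : u n ∈ Set.range v := h.symm ▸ Set.mem_range_self n
      obtain ⟨m, hm⟩ := this
      rcases Nat.lt_or_ge m n with hmn | hmn
      · exfalso
        have := ih m hmn
        have := hu hmn
        omega
      · have : v m ≤ v n := hv.antitone hmn
        omega
    omega

lemma bset_ext {l l' : List ℕ} (hl : IsPartition l) (hl' : IsPartition l')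
    (h : bset l = bset l') : l = l' := by
  apply partition_ext hl hl'
  intro i
  have := strictAnti_ext (beta_strictAnti hl.1) (beta_strictAnti hl'.1) h i
  unfold beta at this
  omega

lemma rd_beta {r : ℕ} {l l' : List ℕ} {i₁ i₂ : ℕ} (hl : IsPartition l)
    (hl' : IsPartition l') (h : RD r l l' i₁ i₂) :
    beta l i₁ ∈ bset l ∧ (beta l i₁ - r) ∉ bset l ∧
      bset l' = insert (beta l i₁ - r) (bset l \ {beta l i₁}) := by
  obtain ⟨h12, ha, hb, hc, hd⟩ := h
  have hbeq : ∀ i, i < i₁ ∨ i₂ < i → beta l' i = beta l i := by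
    intro i hi
    unfold beta
    rw [ha i hi]
  have hbmid : ∀ i, i₁ ≤ i → i < i₂ → beta l' i = beta l (i+1) := by
    intro i h1 h2
    have := hb i h1 h2
    unfold beta
    push_cast
    omega
  have hbtop : beta l' i₂ = beta l i₁ - r := by
    unfold beta
    push_cast
    omega
  have hnm : (beta l i₁ - r) ∉ bset l := by
    apply not_mem_bset_of_between hl.1 (i := i₂)
    · have h1 : beta l (i₂+1) = beta l' (i₂+1) := (hbeq (i₂+1) (Or.inr (by omega))).symm
      have h2 : beta l' (i₂+1) < beta l' i₂ := beta_strictAnti hl'.1 (by omega)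
      omega
    · have : beta l' i₂ < beta l i₂ := by unfold beta; omega
      omega
  refine ⟨Set.mem_range_self i₁, hnm, ?_⟩
  ext z
  simp only [Set.mem_insert_iff, Set.mem_diff, Set.mem_singleton_iff]
  constructor
  · rintro ⟨i, rfl⟩
    rcases Nat.lt_or_ge i i₁ with hi | hi
    · right
      refine ⟨by rw [hbeq i (Or.inl hi)]; exact Set.mem_range_self i, ?_⟩
      rw [hbeq i (Or.inl hi)]
      exact fun hcon => absurd hcon (ne_of_gt (beta_strictAnti hl.1 hi))
    rcases Nat.lt_or_ge i i₂ with hi' | hi'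
    · right
      rw [hbmid i hi hi']
      refine ⟨Set.mem_range_self _, ?_⟩
      exact fun hcon => absurd hcon (ne_of_lt (beta_strictAnti hl.1 (by omega)))
    rcases Nat.eq_or_lt_of_le hi' with heq | hi''
    · left
      rw [heq] at hbtop
      rw [hbtop]
    · right
      rw [hbeq i (Or.inr hi'')]
      refine ⟨Set.mem_range_self _, ?_⟩
      exact fun hcon => absurd hcon (ne_of_lt (beta_strictAnti hl.1 (by omega)))
  · rintro (rfl | ⟨⟨i, rfl⟩, hne⟩)
    · exact ⟨i₂, hbtop⟩
    · rcases Nat.lt_or_ge i i₁ with hi | hi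
      · exact ⟨i, hbeq i (Or.inl hi)⟩
      rcases Nat.lt_or_ge i₂ i with hi' | hi'
      · exact ⟨i, hbeq i (Or.inr hi')⟩
      · -- i₁ ≤ i ≤ i₂, i ≠ i₁ since beta injective
        have hne' : i ≠ i₁ := fun hcon => hne (by rw [hcon])
        refine ⟨i - 1, ?_⟩
        have : i - 1 + 1 = i := by omega
        rw [hbmid (i-1) (by omega) (by omega), this]

lemma part_pos {l : List ℕ} (hl : IsPartition l) {i : ℕ} (hi : i < l.length) :
    0 < l.getD i 0 := by
  rw [List.getD_eq_getElem _ _ hi]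
  exact hl.2 _ (List.getElem_mem _)

/-- the list entries of the result of a beta-move -/
def mv (l : List ℕ) (i₁ i₂ r : ℕ) (x : ℤ) (i : ℕ) : ℕ :=
  if i < i₁ then l.getD i 0 else if i < i₂ then l.getD (i+1) 0 - 1
  else if i = i₂ then (x - r + i₂).toNat else l.getD i 0

lemma trim_sorted : ∀ {M : List ℕ}, M.Pairwise (· ≥ ·) →
    IsPartition (M.filter (fun v => v ≠ 0)) ∧
      ∀ i, (M.filter (fun v => v ≠ 0)).getD i 0 = M.getD i 0 := by
  intro M
  induction M with
  | nil => intro _; exact ⟨⟨List.Pairwise.nil, by simp⟩, fun i => by simp⟩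
  | cons a t ih =>
    intro hs
    have hall : ∀ x ∈ t, x ≤ a := fun x hx => (List.pairwise_cons.mp hs).1 x hx
    have ht : t.Pairwise (· ≥ ·) := hs.of_cons
    obtain ⟨ihp, ihg⟩ := ih ht
    by_cases ha : a = 0
    · subst ha
      have hz : ∀ x ∈ t, x = 0 := fun x hx => Nat.le_zero.mp (hall x hx)
      have hf : (0 :: t).filter (fun v => v ≠ 0) = [] := by
        rw [List.filter_eq_nil_iff]
        intro x hx
        rcases List.mem_cons.mp hx with rfl | hx'
        · simp
        · simp [hz x hx']
      rw [hf]
      refine ⟨⟨List.Pairwise.nil, by simp⟩, fun i => ?_⟩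
      match i with
      | 0 => simp
      | Nat.succ n =>
        simp only [List.getD_nil, List.getD_cons_succ]
        rcases Nat.lt_or_ge n t.length with hn | hn
        · rw [List.getD_eq_getElem _ _ hn]
          exact (hz _ (List.getElem_mem _)).symm
        · rw [List.getD_eq_default _ _ hn]
    · have hf : (a :: t).filter (fun v => v ≠ 0) =
          a :: t.filter (fun v => v ≠ 0) := by
        rw [List.filter_cons_of_pos (by simpa using ha)]
      rw [hf]
      refine ⟨⟨List.pairwise_cons.mpr ⟨?_, ihp.1⟩, ?_⟩, fun i => ?_⟩
      · intro b hb
        exact hall b (List.mem_of_mem_filter hb)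
      · intro v hv
        rcases List.mem_cons.mp hv with rfl | hv'
        · omega
        · exact ihp.2 v hv'
      · match i with
        | 0 => simp
        | Nat.succ n => simpa using ihg n

lemma move_peel {r : ℕ} (hr : 1 ≤ r) {l : List ℕ} (hl : IsPartition l) {x : ℤ}
    (hx : x ∈ bset l) (hnx : x - r ∉ bset l) :
    ∃ c, IsPartition c ∧ PeelRibbon r l c ∧
      bset c = insert (x - r) (bset l \ {x}) := by
  classical
  obtain ⟨i₁, hxi⟩ := hx
  -- x - r > -length
  have hbound : -(l.length : ℤ) < x - r := by
    by_contra hcon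
    push_neg at hcon
    apply hnx
    refine ⟨(-(x - r)).toNat, ?_⟩
    have h0 : (0:ℤ) ≤ -(x - r) := by
      have : (0:ℤ) ≤ (l.length : ℤ) := by positivity
      omega
    have hlen : l.length ≤ (-(x - r)).toNat := by omega
    rw [beta_of_ge_length hlen]
    omega
  -- i₁ < length
  have hi₁len : i₁ < l.length := by
    by_contra hcon
    push_neg at hcon
    have h1 : beta l i₁ = -(i₁ : ℤ) := beta_of_ge_length hcon
    apply hnx
    refine ⟨i₁ + r, ?_⟩
    rw [beta_of_ge_length (by omega)]
    push_cast
    omega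
  -- find i₂
  have hPex : ∃ j, beta l j < x - r := by
    refine ⟨l.length, ?_⟩
    rw [beta_of_ge_length (le_refl _)]
    omega
  set m₀ := Nat.find hPex with hm₀
  have hm₀spec : beta l m₀ < x - r := Nat.find_spec hPex
  have hm₀pos : 0 < m₀ := by
    by_contra h0
    have h0' : m₀ = 0 := by omega
    have h1 : beta l i₁ ≤ beta l 0 := (beta_strictAnti hl.1).antitone (Nat.zero_le _)
    rw [h0'] at hm₀spec
    omega
  set i₂ := m₀ - 1 with hi₂
  have hi₂spec : x - r < beta l i₂ := by
    have h1 : ¬ (beta l i₂ < x - r) := Nat.find_min hPex (by omega)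
    have h2 : beta l i₂ ≠ x - r := fun hcon => hnx ⟨i₂, hcon⟩
    omega
  have hi₂spec1 : beta l (i₂ + 1) < x - r := by
    have : i₂ + 1 = m₀ := by omega
    rw [this]; exact hm₀spec
  have h12 : i₁ ≤ i₂ := by
    by_contra hcon
    push_neg at hcon
    have : beta l i₁ ≤ beta l (i₂ + 1) := (beta_strictAnti hl.1).antitone (by omega)
    omega
  have hi₂len : i₂ < l.length := by
    have : m₀ ≤ l.length := Nat.find_min' hPex (by
      rw [beta_of_ge_length (le_refl _)]; omega)
    omega
  -- basic value facts
  have f3 : ((x - r + i₂).toNat : ℤ) = x - r + i₂ := by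
    have : beta l (i₂+1) = (l.getD (i₂+1) 0 : ℤ) - (i₂+1) := rfl
    have h0 : (0:ℤ) ≤ (l.getD (i₂+1) 0 : ℤ) := by positivity
    omega
  have f4 : x - r + i₂ < (l.getD i₂ 0 : ℤ) := by
    have : beta l i₂ = (l.getD i₂ 0 : ℤ) - i₂ := rfl
    omega
  have f5 : (l.getD (i₂+1) 0 : ℤ) ≤ x - r + i₂ := by
    have : beta l (i₂+1) = (l.getD (i₂+1) 0 : ℤ) - (i₂+1) := rfl
    omega
  have f6 : 0 < l.getD i₂ 0 := part_pos hl hi₂len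
  have hxval : x = (l.getD i₁ 0 : ℤ) - i₁ := hxi.symm
  -- adjacent monotonicity of mv
  have hmono : ∀ i, mv l i₁ i₂ r x (i+1) ≤ mv l i₁ i₂ r x i := by
    intro i
    have g1 : l.getD (i+1) 0 ≤ l.getD i 0 := getD_antitone hl.1 (by omega)
    have g2 : l.getD (i+1+1) 0 ≤ l.getD (i+1) 0 := getD_antitone hl.1 (by omega)
    rcases eq_or_ne i i₂ with rfl | hne2
    · unfold mv
      rw [if_neg (by omega), if_neg (by omega), if_neg (by omega),
        if_neg (by omega), if_neg (by omega), if_pos rfl]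
      omega
    rcases eq_or_ne (i+1) i₂ with he | hne3
    · -- i + 1 = i₂
      rcases Nat.lt_or_ge i i₁ with hi1 | hi1
      · -- then i₁ = i₂ = i + 1? i < i₁ ≤ i₂ = i+1 so i₁ = i₂
        have : i₁ = i₂ := by omega
        unfold mv
        rw [if_neg (by omega), if_neg (by omega), if_pos he, if_pos hi1]
        have g4 : (l.getD i₂ 0 : ℤ) ≤ (l.getD i 0 : ℤ) := by
          exact_mod_cast getD_antitone hl.1 (by omega)
        omega
      · unfold mv
        rw [if_neg (by omega), if_neg (by omega), if_pos he,
          if_neg (by omega), if_pos (by omega)]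
        have he' : i + 1 = i₂ := he
        have g5 : (l.getD (i+1) 0 : ℤ) = (l.getD i₂ 0 : ℤ) := by rw [he']
        omega
    rcases Nat.lt_or_ge (i+1) i₁ with h1 | h1
    · unfold mv
      rw [if_pos h1, if_pos (by omega)]
      exact g1
    rcases eq_or_ne (i+1) i₁ with he1 | hne1
    · -- i+1 = i₁ < i₂ (since i+1 ≠ i₂)
      have h7 : i + 1 < i₂ := by omega
      unfold mv
      rw [if_neg (by omega), if_pos (by omega), if_pos (by omega)]
      omega
    · -- i₁ ≤ i
      have h8 : i₁ ≤ i := by omega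
      rcases Nat.lt_or_ge (i+1) i₂ with h9 | h9
      · unfold mv
        rw [if_neg (by omega), if_pos h9, if_neg (by omega), if_pos (by omega)]
        omega
      · -- i+1 > i₂ (≠), and i ≠ i₂ so i > i₂
        have h10 : i₂ < i := by omega
        unfold mv
        rw [if_neg (by omega), if_neg (by omega), if_neg (by omega),
          if_neg (by omega), if_neg (by omega), if_neg (by omega)]
        exact g1
  have hanti : Antitone (mv l i₁ i₂ r x) := antitone_nat_of_succ_le hmono
  -- the candidate list
  set M := (List.range l.length).map (mv l i₁ i₂ r x) with hM
  have hMs : M.Pairwise (· ≥ ·) := by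
    apply List.pairwise_iff_getElem.mpr
    intro a b ha hb hab
    simp only [hM, List.getElem_map, List.getElem_range]
    exact hanti (le_of_lt hab)
  have hMget : ∀ i, M.getD i 0 = mv l i₁ i₂ r x i := by
    intro i
    rcases Nat.lt_or_ge i l.length with hi | hi
    · rw [hM, List.getD_eq_getElem _ _ (by simpa using hi)]
      simp
    · rw [hM, List.getD_eq_default _ _ (by simpa using hi)]
      unfold mv
      rw [if_neg (by omega), if_neg (by omega), if_neg (by omega),
        List.getD_eq_default _ _ hi]
  set c := M.filter (fun v => v ≠ 0) with hc
  obtain ⟨hcp, hcg⟩ := trim_sorted hMs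
  have hcget : ∀ i, c.getD i 0 = mv l i₁ i₂ r x i := fun i => (hcg i).trans (hMget i)
  have hrd : RD r l c i₁ i₂ := by
    refine ⟨h12, ?_, ?_, ?_, ?_⟩
    · intro i hi
      rw [hcget]
      unfold mv
      rcases hi with hi | hi
      · rw [if_pos hi]
      · rw [if_neg (by omega), if_neg (by omega), if_neg (by omega)]
    · intro i hi1 hi2
      rw [hcget]
      unfold mv
      rw [if_neg (by omega), if_pos hi2]
      have : 0 < l.getD (i+1) 0 := part_pos hl (by omega)
      omega
    · rw [hcget]
      unfold mv
      rw [if_neg (by omega), if_neg (by omega), if_pos rfl]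
      omega
    · rw [hcget]
      unfold mv
      rw [if_neg (by omega), if_neg (by omega), if_pos rfl]
      omega
  have hpeelc := rd_peel hl hcp hr hrd
  obtain ⟨hmem, hnm, hbs⟩ := rd_beta hl hcp hrd
  refine ⟨c, hcp, hpeelc, ?_⟩
  rw [hbs, hxi]

lemma peel_beta {r : ℕ} {l l' : List ℕ} (hl : IsPartition l)
    (hp : PeelRibbon r l l') (hr : 1 ≤ r) :
    ∃ x, x ∈ bset l ∧ x - r ∉ bset l ∧ bset l' = insert (x - r) (bset l \ {x}) := by
  obtain ⟨i₁, i₂, hrows⟩ := peel_rows_icc hl hp hr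
  have hrd := peel_rd hl hp hrows hr
  obtain ⟨h1, h2, h3⟩ := rd_beta hl hp.1 hrd
  exact ⟨beta l i₁, h1, h2, h3⟩

lemma cellSet_nil : cellSet ([] : List ℕ) = ∅ := by
  ext ⟨i, j⟩
  simp [cellSet]

lemma peel_not_empty {r : ℕ} (hr : 1 ≤ r) {l a : List ℕ}
    (hp : PeelRibbon r l a) (h : cellSet l = ∅) : False := by
  obtain ⟨_, hss, hcard, _⟩ := hp
  have : cellSet l \ cellSet a = ∅ := by
    rw [h]; simp
  rw [this, Set.ncard_empty] at hcard
  omega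

lemma core_closed {r : ℕ} (hr : 1 ≤ r) :
    ∀ n, ∀ l : List ℕ, (cellSet l).ncard ≤ n → IsPartition l → EmptyCore r l →
      ∀ a, PeelRibbon r l a → EmptyCore r a := by
  intro n
  induction n with
  | zero =>
    intro l hn hl hcore a hp
    exfalso
    have hfin := cellSet_finite l
    have : cellSet l = ∅ := by
      rw [← Set.ncard_eq_zero hfin]; omega
    exact peel_not_empty hr hp this
  | succ n ih =>
    intro l hn hl hcore a hp
    rcases Relation.ReflTransGen.cases_head hcore with heq | ⟨b, hpb, hcoreb⟩
    · exfalso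
      exact peel_not_empty hr hp (by rw [heq, cellSet_nil])
    by_cases hab : a = b
    · rw [hab]; exact hcoreb
    obtain ⟨x, hx, hnx, hbsa⟩ := peel_beta hl hp hr
    obtain ⟨y, hy, hny, hbsb⟩ := peel_beta hl hpb hr
    have ha : IsPartition a := hp.1
    have hb : IsPartition b := hpb.1
    have hxy : x ≠ y := by
      intro hcon
      apply hab
      apply bset_ext ha hb
      rw [hbsa, hbsb, hcon]
    have hyx' : y - r ≠ x := fun hcon => hny (hcon ▸ hx)
    have hxy' : x - r ≠ y := fun hcon => hnx (hcon ▸ hy)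
    -- y-move applicable from a
    have hya : y ∈ bset a := by
      rw [hbsa]
      exact Set.mem_insert_of_mem _ ⟨hy, fun hcon => hxy (hcon.symm ▸ rfl)⟩
    have hnya : y - r ∉ bset a := by
      rw [hbsa]
      rintro (hcon | ⟨hcon, _⟩)
      · exact hxy (by omega)
      · exact hny hcon
    obtain ⟨c, hcpart, hpac, hbsc⟩ := move_peel hr ha hya hnya
    -- x-move applicable from b
    have hxb : x ∈ bset b := by
      rw [hbsb]
      exact Set.mem_insert_of_mem _ ⟨hx, fun hcon => hxy (hcon ▸ rfl)⟩
    have hnxb : x - r ∉ bset b := by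
      rw [hbsb]
      rintro (hcon | ⟨hcon, _⟩)
      · exact hxy (by omega)
      · exact hnx hcon
    obtain ⟨c', hcpart', hpbc', hbsc'⟩ := move_peel hr hb hxb hnxb
    -- c = c'
    have hcc : c = c' := by
      apply bset_ext hcpart hcpart'
      rw [hbsc, hbsc', hbsa, hbsb]
      ext z
      simp only [Set.mem_insert_iff, Set.mem_diff, Set.mem_singleton_iff]
      constructor
      · rintro (rfl | ⟨(rfl | ⟨hz, hz2⟩), hz3⟩)
        · exact Or.inr ⟨Or.inl rfl, hyx'⟩
        · exact Or.inl rfl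
        · exact Or.inr ⟨Or.inr ⟨hz, hz3⟩, hz2⟩
      · rintro (rfl | ⟨(rfl | ⟨hz, hz2⟩), hz3⟩)
        · exact Or.inr ⟨Or.inl rfl, hxy'⟩
        · exact Or.inl rfl
        · exact Or.inr ⟨Or.inr ⟨hz, hz3⟩, hz2⟩
    -- cellSet b is smaller
    have hblt : (cellSet b).ncard ≤ n := by
      have hss : cellSet b ⊂ cellSet l := hpb.2.1
      have := Set.ncard_lt_ncard hss (cellSet_finite l)
      omega
    have hcorec : EmptyCore r c := by
      rw [hcc]
      exact ih b hblt hb hcoreb c' hpbc'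
    exact Relation.ReflTransGen.head hpac hcorec

lemma rcs_getD {r k : ℕ} (l : List ℕ) {i : ℕ} (hi : i < k) :
    (rcs r k l).getD i 0 = (l.getD i 0 + k - i - 1) % r := by
  rw [rcs, List.getD_eq_getElem _ _ (by simpa using hi)]
  simp

theorem peeling_cyclically_shifts_row_colors'
    (r k : ℕ) (hr : 1 ≤ r) (l l' : List ℕ) (hl : IsPartition l)
    (hcore : EmptyCore r l) (hpeel : PeelRibbon r l l') (hk : l.length ≤ k)
    (i₁ i₂ : ℕ)
    (hrows : {i : ℕ | ∃ j, (i, j) ∈ cellSet l \ cellSet l'} = Set.Icc i₁ i₂) :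
    EmptyCore r l' ∧ i₁ ≤ i₂ ∧ i₂ < k ∧
    (∀ i < k, (rcs r k l').getD i 0 =
      if i < i₁ ∨ i₂ < i then (rcs r k l).getD i 0
      else if i = i₂ then (rcs r k l).getD i₁ 0
      else (rcs r k l).getD (i + 1) 0) ∧
    (rcs r k l').Perm (rcs r k l) := by
  have hrd := peel_rd hl hpeel hrows hr
  obtain ⟨h12, ha, hb, hc, hd⟩ := hrd
  have hcore' : EmptyCore r l' :=
    core_closed hr (cellSet l).ncard l (le_refl _) hl hcore l' hpeel
  have hi₂len : i₂ < l.length := lt_length_of_getD_pos (by omega)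
  have hi₂k : i₂ < k := by omega
  -- the pointwise formula
  have hform : ∀ i < k, (rcs r k l').getD i 0 =
      if i < i₁ ∨ i₂ < i then (rcs r k l).getD i 0
      else if i = i₂ then (rcs r k l).getD i₁ 0
      else (rcs r k l).getD (i + 1) 0 := by
    intro i hik
    by_cases h1 : i < i₁ ∨ i₂ < i
    · rw [if_pos h1, rcs_getD _ hik, rcs_getD _ hik, ha i h1]
    rw [if_neg h1]
    push_neg at h1
    by_cases h2 : i = i₂
    · subst h2
      rw [if_pos rfl, rcs_getD _ hik, rcs_getD _ (by omega : i₁ < k)]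
      have : l.getD i₁ 0 + k - i₁ - 1 = (l'.getD i 0 + k - i - 1) + r := by omega
      rw [this, Nat.add_mod_right]
    · rw [if_neg h2, rcs_getD _ hik, rcs_getD _ (by omega : i + 1 < k)]
      have hbi := hb i (by omega) (by omega)
      have : l'.getD i 0 + k - i - 1 = l.getD (i+1) 0 + k - (i+1) - 1 := by omega
      rw [this]
  refine ⟨hcore', h12, hi₂k, hform, ?_⟩
  -- permutation via explicit decomposition
  set f : ℕ → ℕ := fun i => (l.getD i 0 + k - i - 1) % r with hf
  set f' : ℕ → ℕ := fun i => (l'.getD i 0 + k - i - 1) % r with hf'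
  set m := i₂ - i₁ with hm
  have hksplit : k = i₁ + ((m + 1) + (k - i₂ - 1)) := by omega
  have hsplit : ∀ g : ℕ → ℕ, (List.range k).map g =
      (List.range i₁).map g
        ++ (List.range (m+1)).map (fun t => g (i₁ + t))
        ++ (List.range (k - i₂ - 1)).map (fun t => g (i₁ + (m + 1) + t)) := by
    intro g
    conv_lhs => rw [hksplit]
    simp only [List.range_add, List.map_append, List.map_map, List.append_assoc,
      Function.comp_def, Nat.add_assoc]
  have hA : rcs r k l = (List.range k).map f := rfl
  have hA' : rcs r k l' = (List.range k).map f' := rfl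
  rw [hA, hA', hsplit f, hsplit f']
  apply List.Perm.append
  · apply List.Perm.append
    · apply List.Perm.of_eq
      apply List.map_congr_left
      intro t ht
      rw [List.mem_range] at ht
      simp only [hf, hf']
      rw [ha t (Or.inl ht)]
    · -- middle block: cyclic shift
      have hmid' : (List.range (m+1)).map (fun t => f' (i₁ + t)) =
          ((List.range m).map (fun t => f (i₁ + t + 1))) ++ [f i₁] := by
        rw [List.range_succ, List.map_append]
        congr 1
        · apply List.map_congr_left
          intro t ht
          rw [List.mem_range] at ht
          simp only [hf, hf', Function.comp]
          have hbi := hb (i₁ + t) (by omega) (by omega)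
          have h1 : i₁ + t < k := by omega
          have : l'.getD (i₁+t) 0 + k - (i₁+t) - 1
              = l.getD (i₁+t+1) 0 + k - (i₁+t+1) - 1 := by omega
          rw [this]
        · simp only [hf, hf', List.map_cons, List.map_nil]
          congr 1
          have he : i₁ + m = i₂ := by omega
          rw [he]
          have : l.getD i₁ 0 + k - i₁ - 1 = (l'.getD i₂ 0 + k - i₂ - 1) + r := by omega
          rw [this, Nat.add_mod_right]
      have hmid : (List.range (m+1)).map (fun t => f (i₁ + t)) =
          f i₁ :: (List.range m).map (fun t => f (i₁ + t + 1)) := by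
        rw [List.range_succ_eq_map, List.map_cons, List.map_map]
        congr 1
      rw [hmid', hmid]
      exact List.perm_append_singleton _ _
  · apply List.Perm.of_eq
    apply List.map_congr_left
    intro t ht
    simp only [hf, hf']
    rw [ha (i₁ + (m+1) + t) (Or.inr (by omega))]

theorem peeling_cyclically_shifts_row_colors
    (r k : ℕ) (hr : 1 ≤ r) (l l' : List ℕ) (hl : IsPartition l)
    (hcore : EmptyCore r l) (hpeel : PeelRibbon r l l') (hk : l.length ≤ k)
    (i₁ i₂ : ℕ)
    (hrows : {i : ℕ | ∃ j, (i, j) ∈ cellSet l \ cellSet l'} = Set.Icc i₁ i₂) :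
    EmptyCore r l' ∧ i₁ ≤ i₂ ∧ i₂ < k ∧
    (∀ i < k, (rcs r k l').getD i 0 =
      if i < i₁ ∨ i₂ < i then (rcs r k l).getD i 0
      else if i = i₂ then (rcs r k l).getD i₁ 0
      else (rcs r k l).getD (i + 1) 0) ∧
    (rcs r k l').Perm (rcs r k l) := by
  exact peeling_cyclically_shifts_row_colors' r k hr l l' hl hcore hpeel hk i₁ i₂ hrows
end

section
/- Let w and w' be rearrangements of each other over a linearly ordered alphabet, and suppose w' is obtained from w by cyclically shifting a consecutive block a_{i_1},…,a_{i_2} (moving a_{i_1} to position i_2 and shifting the rest left by one). Then inv(w) − inv(w') is congruent modulo 2 to the number of indices i with i_1 < i ≤ i_2 and a_i ≠ a_{i_1}. -/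
section Aux
variable {α : Type*} [LinearOrder α]

lemma invOn_nil : invOn ([] : List α) = 0 := rfl

lemma invOn_cons (x : α) (w : List α) :
    invOn (x :: w) = (w.filter (fun b => decide (b < x))).length + invOn w := by
  simp [invOn, List.tails_cons]

def crossN (l₁ l₂ : List α) : ℕ :=
  (l₁.map (fun x => (l₂.filter (fun b => decide (b < x))).length)).sum

lemma invOn_append (l₁ l₂ : List α) :
    invOn (l₁ ++ l₂) = invOn l₁ + invOn l₂ + crossN l₁ l₂ := by
  induction l₁ with
  | nil => simp [invOn_nil, crossN]
  | cons x xs ih =>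
    simp only [List.cons_append, invOn_cons, List.filter_append, List.length_append, ih,
      crossN, List.map_cons, List.sum_cons]
    ring

lemma crossN_append_right (l₁ l₂ l₃ : List α) :
    crossN l₁ (l₂ ++ l₃) = crossN l₁ l₂ + crossN l₁ l₃ := by
  induction l₁ with
  | nil => simp [crossN]
  | cons x xs ih =>
    simp only [crossN, List.map_cons, List.sum_cons, List.filter_append,
      List.length_append] at *
    omega

lemma invOn_three (u X z : List α) :
    invOn (u ++ (X ++ z)) =
      invOn u + invOn X + invOn z + crossN u X + crossN u z + crossN X z := by
  rw [invOn_append, invOn_append, crossN_append_right]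
  ring

lemma crossN_perm_right {l₂ l₂' : List α} (h : l₂.Perm l₂') (l₁ : List α) :
    crossN l₁ l₂ = crossN l₁ l₂' := by
  unfold crossN
  congr 1
  apply List.map_congr_left
  intro x _
  exact (h.filter _).length_eq

lemma crossN_perm_left {l₁ l₁' : List α} (h : l₁.Perm l₁') (l₂ : List α) :
    crossN l₁ l₂ = crossN l₁' l₂ :=
  (h.map _).sum_eq

lemma crossN_singleton (v : List α) (a : α) :
    crossN v [a] = (v.filter (fun b => decide (a < b))).length := by
  induction v with
  | nil => rfl
  | cons b t ih =>
    by_cases h : a < b <;>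
      simp [crossN, List.filter_cons, h] at * <;> omega

lemma count_split (v : List α) (a : α) :
    (v.filter (fun b => decide (b < a))).length + (v.filter (fun b => decide (a < b))).length
      = v.countP (fun b => decide (b ≠ a)) := by
  induction v with
  | nil => simp
  | cons b t ih =>
    simp only [List.filter_cons, List.countP_cons, ne_eq, decide_not] at ih ⊢
    rcases lt_trichotomy b a with h | h | h
    · simp [h, not_lt.2 h.le, ne_of_lt h, ih]; omega
    · subst h
      simp [ih]
    · simp [h, not_lt.2 h.le, ne_of_gt h, ih]; omega

end Aux

theorem inv_parity_of_cyclic_shift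
    {α : Type*} [LinearOrder α] (u v z : List α) (a : α) :
    ((invOn (u ++ a :: v ++ z) : ℤ) - (invOn (u ++ (v ++ [a]) ++ z) : ℤ)) ≡
      ((v.countP (fun b => decide (b ≠ a)) : ℕ) : ℤ) [ZMOD 2] := by
  have hperm : (a :: v).Perm (v ++ [a]) := (List.perm_append_singleton a v).symm
  have e1 : u ++ a :: v ++ z = u ++ ((a :: v) ++ z) := by simp
  have e2 : u ++ (v ++ [a]) ++ z = u ++ ((v ++ [a]) ++ z) := by simp
  rw [e1, e2, invOn_three, invOn_three,
    crossN_perm_right hperm u, crossN_perm_left hperm z]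
  have h3 : invOn (a :: v) = (v.filter (fun b => decide (b < a))).length + invOn v :=
    invOn_cons a v
  have h4 : invOn (v ++ [a]) = invOn v + (v.filter (fun b => decide (a < b))).length := by
    rw [invOn_append, crossN_singleton]
    simp [invOn_cons, invOn_nil]
  have hsplit := count_split v a
  show Int.ModEq 2 _ _
  simp only [Int.ModEq, h3, h4]
  omega
end

section
/- (Lübeck–Prasad identity, combinatorial form for r = 2) For every partition λ of 2n with an empty 2-core and every partition μ of n, the irreducible character of the hyperoctahedral group B_n = Z_2 ≀ S_n indexed by the 2-quotient of λ, evaluated at the conjugacy class of type (μ, ∅), equals ε(λ)·χ^λ_{2μ}, where χ^λ_{2μ} is the irreducible character of S_{2n} indexed by λ evaluated on the class of cycle type 2μ = (2μ_1,…,2μ_t), and ε(λ) = (−1)^{odd(λ)/2} with odd(λ) the number of odd parts of λ. -/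
/-- Murnaghan–Nakayama recursion for the value `χ^λ_ν` of the irreducible
`S_m`-character indexed by the partition with boundary sequence `δ`, at a
conjugacy class of cycle type `ν`. Removing a ribbon of length `m` amounts to
switching entries `δ_q = 1` (true) and `δ_{q+m} = 0` (false); the sign is
`(-1)` to the number of `0`s strictly between them. -/
def chiW : List Bool → List ℕ → ℤ
  | δ, [] => if δ.Pairwise (· ≤ ·) then 1 else 0
  | δ, m :: rest =>
    ∑ q ∈ Finset.range δ.length,
      if q + m < δ.length ∧ δ.getD q false = true ∧ δ.getD (q + m) true = false then
        (-1 : ℤ) ^ (((δ.drop (q + 1)).take (m - 1)).count false) *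
          chiW ((δ.set q false).set (q + m) true) rest
      else 0

/-- Murnaghan–Nakayama recursion for the value of the irreducible character of
the hyperoctahedral group `B_n = ℤ/2 ≀ S_n` indexed by the pair of partitions
with boundary sequences `(δ₀, δ₁)`, at the conjugacy class `(μ, ∅)` (all cycles
of color `0`, cycle lengths `μ`): at each step a ribbon is removed from one of
the two components. -/
def psi2 : List Bool → List Bool → List ℕ → ℤ
  | δ₀, δ₁, [] => if δ₀.Pairwise (· ≤ ·) ∧ δ₁.Pairwise (· ≤ ·) then 1 else 0
  | δ₀, δ₁, m :: rest =>
    (∑ q ∈ Finset.range δ₀.length,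
      if q + m < δ₀.length ∧ δ₀.getD q false = true ∧ δ₀.getD (q + m) true = false then
        (-1 : ℤ) ^ (((δ₀.drop (q + 1)).take (m - 1)).count false) *
          psi2 ((δ₀.set q false).set (q + m) true) δ₁ rest
      else 0) +
    (∑ q ∈ Finset.range δ₁.length,
      if q + m < δ₁.length ∧ δ₁.getD q false = true ∧ δ₁.getD (q + m) true = false then
        (-1 : ℤ) ^ (((δ₁.drop (q + 1)).take (m - 1)).count false) *
          psi2 δ₀ ((δ₁.set q false).set (q + m) true) rest
      else 0)


namespace LP

/-- indicator that position `p` holds `false` (0 off the end). -/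
def zb (d : List Bool) (p : ℕ) : ℕ := if d.getD p true = false then 1 else 0
/-- indicator that position `p` holds `true` (0 off the end). -/
def tb (d : List Bool) (p : ℕ) : ℕ := if d.getD p false = true then 1 else 0
/-- number of `true`s before position `p`. -/
def Tr (d : List Bool) (p : ℕ) : ℕ := ∑ k ∈ Finset.range p, tb d k
/-- number of `false`s having an odd number of `true`s before them. -/
def Nv (d : List Bool) : ℕ := ∑ p ∈ Finset.range d.length, zb d p * (Tr d p % 2)
/-- the interlacing of two boolean words of length `t`. -/
def itl (d0 d1 : List Bool) (t : ℕ) : List Bool :=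
  (List.range (2 * t)).map (fun v => (if v % 2 = 0 then d0 else d1).getD (v / 2) false)

lemma zb_of_ge {d : List Bool} {p : ℕ} (h : d.length ≤ p) : zb d p = 0 := by
  simp [zb, List.getD_eq_getElem?_getD, List.getElem?_eq_none h]

lemma tb_of_ge {d : List Bool} {p : ℕ} (h : d.length ≤ p) : tb d p = 0 := by
  simp [tb, List.getD_eq_getElem?_getD, List.getElem?_eq_none h]

lemma zb_add_tb {d : List Bool} {p : ℕ} (h : p < d.length) : zb d p + tb d p = 1 := by
  rw [zb, tb, List.getD_eq_getElem d true h, List.getD_eq_getElem d false h]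
  cases d[p] <;> simp

lemma zb_le_one (d : List Bool) (p : ℕ) : zb d p ≤ 1 := by
  unfold zb; split <;> omega

lemma count_false_eq (l : List Bool) : l.count false = ∑ k ∈ Finset.range l.length, zb l k := by
  induction l with
  | nil => simp
  | cons b l ih =>
    rw [List.count_cons, ih, List.length_cons, Finset.sum_range_succ']
    simp only [zb, List.getD_cons_succ, List.getD_cons_zero]
    cases b <;> simp

lemma count_true_eq (l : List Bool) : l.count true = ∑ k ∈ Finset.range l.length, tb l k := by
  induction l with
  | nil => simp
  | cons b l ih =>
    rw [List.count_cons, ih, List.length_cons, Finset.sum_range_succ']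
    simp only [tb, List.getD_cons_succ, List.getD_cons_zero]
    cases b <;> simp

lemma zb_take {d : List Bool} {i k : ℕ} (h : k < i) : zb (d.take i) k = zb d k := by
  unfold zb
  rcases lt_or_ge k d.length with h2 | h2
  · rw [List.getD_eq_getElem _ _ (by simp; omega), List.getD_eq_getElem _ _ h2]
    simp [List.getElem_take]
  · rw [List.getD_eq_default _ _ (by simp; omega), List.getD_eq_default _ _ h2]

lemma tb_take {d : List Bool} {i k : ℕ} (h : k < i) : tb (d.take i) k = tb d k := by
  unfold tb
  rcases lt_or_ge k d.length with h2 | h2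
  · rw [List.getD_eq_getElem _ _ (by simp; omega), List.getD_eq_getElem _ _ h2]
    simp [List.getElem_take]
  · rw [List.getD_eq_default _ _ (by simp; omega), List.getD_eq_default _ _ h2]

lemma count_true_take (d : List Bool) (i : ℕ) : (d.take i).count true = Tr d i := by
  rcases le_or_gt i d.length with h | h
  · rw [count_true_eq, List.length_take, min_eq_left h, Tr]
    exact Finset.sum_congr rfl fun k hk => tb_take (Finset.mem_range.mp hk)
  · rw [List.take_of_length_le h.le, count_true_eq, Tr]
    rw [show i = d.length + (i - d.length) by omega, Finset.sum_range_add]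
    have : ∀ k ∈ Finset.range (i - d.length), tb d (d.length + k) = 0 :=
      fun k _ => tb_of_ge (by omega)
    rw [Finset.sum_congr rfl this]
    simp

lemma zb_drop {d : List Bool} {i k : ℕ} : zb (d.drop i) k = zb d (i + k) := by
  unfold zb
  rcases lt_or_ge (i + k) d.length with h2 | h2
  · rw [List.getD_eq_getElem _ _ (by simp; omega), List.getD_eq_getElem _ _ h2]
    simp [List.getElem_drop]
  · rw [List.getD_eq_default _ _ (by simp; omega), List.getD_eq_default _ _ h2]

lemma count_false_drop (d : List Bool) (i : ℕ) :
    (d.drop i).count false = ∑ k ∈ Finset.Ico i d.length, zb d k := by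
  rw [count_false_eq, Finset.sum_Ico_eq_sum_range, List.length_drop]
  exact Finset.sum_congr rfl fun k _ => zb_drop

lemma anchor_iff (d : List Bool) (i : ℕ) :
    AnchorAt d i ↔ Tr d i = ∑ k ∈ Finset.Ico i d.length, zb d k := by
  rw [AnchorAt, count_true_take, count_false_drop]

lemma count_false_drop_take {d : List Bool} {a b : ℕ} (h : a + b ≤ d.length) :
    ((d.drop a).take b).count false = ∑ k ∈ Finset.range b, zb d (a + k) := by
  rw [count_false_eq, List.length_take, List.length_drop, min_eq_left (by omega)]
  refine Finset.sum_congr rfl fun k hk => ?_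
  rw [zb_take (Finset.mem_range.mp hk), zb_drop]

lemma negpow {a b : ℕ} (h : a % 2 = b % 2) : ((-1 : ℤ))^a = (-1)^b := by
  conv_lhs => rw [← Nat.div_add_mod a 2]
  conv_rhs => rw [← Nat.div_add_mod b 2]
  rw [pow_add, pow_add, pow_mul, pow_mul, h]
  norm_num

lemma gauss (n : ℕ) : (∑ i ∈ Finset.range n, i) * 2 = n * (n - 1) := by
  have := Finset.sum_range_id_mul_two n
  omega

lemma pairs_sum (A : Finset ℕ) :
    ∑ p ∈ A, (A.filter (· < p)).card = A.card * (A.card - 1) / 2 := by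
  induction A using Finset.induction_on_max with
  | empty => simp
  | insert a s ha ih =>
    have hans : a ∉ s := fun h => absurd (ha a h) (lt_irrefl a)
    rw [Finset.sum_insert hans]
    have h1 : (insert a s).filter (· < a) = s := by
      rw [Finset.filter_insert]
      simp only [lt_irrefl, if_false]
      exact Finset.filter_true_of_mem fun x hx => ha x hx
    have h2 : ∀ p ∈ s, ((insert a s).filter (· < p)).card = (s.filter (· < p)).card := by
      intro p hp
      congr 1
      rw [Finset.filter_insert]
      have : ¬ a < p := (ha p hp).asymm
      simp [this]
    rw [h1, Finset.sum_congr rfl h2, ih, Finset.card_insert_of_notMem hans]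
    set c := s.card with hc
    have g1 := gauss c
    have g2 := gauss (c + 1)
    have g3 : (∑ i ∈ Finset.range (c+1), i) = (∑ i ∈ Finset.range c, i) + c :=
      Finset.sum_range_succ _ _
    omega

lemma sum_parity_split {M : Type*} [AddCommMonoid M] (f : ℕ → M) (n : ℕ) :
    ∑ k ∈ Finset.range n, f k =
      (∑ i ∈ Finset.range ((n+1)/2), f (2*i)) + ∑ i ∈ Finset.range (n/2), f (2*i+1) := by
  induction n with
  | zero => simp
  | succ n ih =>
    rw [Finset.sum_range_succ, ih]
    rcases Nat.even_or_odd n with ⟨a, ha⟩ | ⟨a, ha⟩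
    · have h1 : (n+1+1)/2 = a+1 := by omega
      have h2 : (n+1)/2 = a := by omega
      have h3 : n/2 = a := by omega
      have h6 : (∑ i ∈ Finset.range (a+1), f (2*i)) =
          (∑ i ∈ Finset.range a, f (2*i)) + f n := by
        rw [Finset.sum_range_succ]
        congr 2
        omega
      rw [h1, h2, h3, h6]
      abel
    · have h1 : (n+1+1)/2 = a+1 := by omega
      have h2 : (n+1)/2 = a+1 := by omega
      have h4 : n/2 = a := by omega
      have h6 : (∑ i ∈ Finset.range (a+1), f (2*i+1)) =
          (∑ i ∈ Finset.range a, f (2*i+1)) + f n := by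
        rw [Finset.sum_range_succ]
        congr 2
        omega
      rw [h1, h2, h4, h6]
      abel

lemma getD_set_ne {l : List Bool} {i j : ℕ} (a dflt : Bool) (h : i ≠ j) :
    (l.set i a).getD j dflt = l.getD j dflt := by
  simp [List.getD_eq_getElem?_getD, List.getElem?_set, h]

lemma getD_set_eq {l : List Bool} {i : ℕ} (a dflt : Bool) (h : i < l.length) :
    (l.set i a).getD i dflt = a := by
  simp [List.getD_eq_getElem?_getD, List.getElem?_set, h]

section Move

variable {d : List Bool} {u w : ℕ}

/-- the word after moving the bead: `true` at `u` becomes `false`, `false` at `w` becomes `true`. -/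
def mv (d : List Bool) (u w : ℕ) : List Bool := (d.set u false).set w true

lemma mv_length : (mv d u w).length = d.length := by simp [mv]

lemma tb_mv_self (huw : u ≠ w) (hu : u < d.length) : tb (mv d u w) u = 0 := by
  unfold tb mv
  rw [getD_set_ne _ _ (Ne.symm huw), getD_set_eq _ _ hu]
  simp

lemma tb_mv_w (hw : w < d.length) : tb (mv d u w) w = 1 := by
  unfold tb mv
  rw [getD_set_eq _ _ (by rw [List.length_set]; exact hw)]
  simp

lemma tb_mv_other {k : ℕ} (hku : k ≠ u) (hkw : k ≠ w) : tb (mv d u w) k = tb d k := by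
  unfold tb mv
  rw [getD_set_ne _ _ (Ne.symm hkw), getD_set_ne _ _ (Ne.symm hku)]

lemma zb_mv_self (huw : u ≠ w) (hu : u < d.length) : zb (mv d u w) u = 1 := by
  unfold zb mv
  rw [getD_set_ne _ _ (Ne.symm huw), getD_set_eq _ _ hu]
  simp

lemma zb_mv_w (hw : w < d.length) : zb (mv d u w) w = 0 := by
  unfold zb mv
  rw [getD_set_eq _ _ (by rw [List.length_set]; exact hw)]
  simp

lemma zb_mv_other {k : ℕ} (hku : k ≠ u) (hkw : k ≠ w) : zb (mv d u w) k = zb d k := by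
  unfold zb mv
  rw [getD_set_ne _ _ (Ne.symm hkw), getD_set_ne _ _ (Ne.symm hku)]

lemma tb_mv (huw : u ≠ w) (hu : u < d.length) (hw : w < d.length)
    (htu : tb d u = 1) (htw : tb d w = 0) :
    ∀ k, tb (mv d u w) k + (if k = u then 1 else 0) = tb d k + (if k = w then 1 else 0) := by
  intro k
  rcases eq_or_ne k u with rfl | hku
  · rw [tb_mv_self huw hu, htu, if_pos rfl, if_neg huw]
  · rcases eq_or_ne k w with rfl | hkw
    · rw [tb_mv_w hw, htw, if_pos rfl, if_neg hku]
    · rw [tb_mv_other hku hkw, if_neg hku, if_neg hkw]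

lemma zb_mv (huw : u ≠ w) (hu : u < d.length) (hw : w < d.length)
    (hzu : zb d u = 0) (hzw : zb d w = 1) :
    ∀ k, zb (mv d u w) k + (if k = w then 1 else 0) = zb d k + (if k = u then 1 else 0) := by
  intro k
  rcases eq_or_ne k u with rfl | hku
  · rw [zb_mv_self huw hu, hzu, if_pos rfl, if_neg huw]
  · rcases eq_or_ne k w with rfl | hkw
    · rw [zb_mv_w hw, hzw, if_pos rfl, if_neg hku]
    · rw [zb_mv_other hku hkw, if_neg hku, if_neg hkw]

lemma sum_ite_eq_range (u i : ℕ) :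
    (∑ k ∈ Finset.range i, if k = u then (1:ℕ) else 0) = if u < i then 1 else 0 := by
  rw [Finset.sum_ite_eq' (Finset.range i) u (fun _ => (1:ℕ))]
  simp

lemma sum_ite_eq_Ico (u a b : ℕ) :
    (∑ k ∈ Finset.Ico a b, if k = u then (1:ℕ) else 0) = if a ≤ u ∧ u < b then 1 else 0 := by
  rw [Finset.sum_ite_eq' (Finset.Ico a b) u (fun _ => (1:ℕ))]
  simp [Finset.mem_Ico]

lemma Tr_mv (huw : u ≠ w) (hu : u < d.length) (hw : w < d.length)
    (htu : tb d u = 1) (htw : tb d w = 0) (i : ℕ) :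
    Tr (mv d u w) i + (if u < i then 1 else 0) = Tr d i + (if w < i then 1 else 0) := by
  unfold Tr
  calc (∑ k ∈ Finset.range i, tb (mv d u w) k) + (if u < i then 1 else 0)
      = ∑ k ∈ Finset.range i, (tb (mv d u w) k + if k = u then 1 else 0) := by
        rw [Finset.sum_add_distrib, sum_ite_eq_range]
    _ = ∑ k ∈ Finset.range i, (tb d k + if k = w then 1 else 0) :=
        Finset.sum_congr rfl fun k _ => tb_mv huw hu hw htu htw k
    _ = _ := by rw [Finset.sum_add_distrib, sum_ite_eq_range]

lemma zb_sum_Ico_mv (huw : u ≠ w) (hu : u < d.length) (hw : w < d.length)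
    (hzu : zb d u = 0) (hzw : zb d w = 1) (a b : ℕ) :
    (∑ k ∈ Finset.Ico a b, zb (mv d u w) k) + (if a ≤ w ∧ w < b then 1 else 0) =
      (∑ k ∈ Finset.Ico a b, zb d k) + (if a ≤ u ∧ u < b then 1 else 0) := by
  calc (∑ k ∈ Finset.Ico a b, zb (mv d u w) k) + (if a ≤ w ∧ w < b then 1 else 0)
      = ∑ k ∈ Finset.Ico a b, (zb (mv d u w) k + if k = w then 1 else 0) := by
        rw [Finset.sum_add_distrib, sum_ite_eq_Ico]
    _ = ∑ k ∈ Finset.Ico a b, (zb d k + if k = u then 1 else 0) :=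
        Finset.sum_congr rfl fun k _ => zb_mv huw hu hw hzu hzw k
    _ = _ := by rw [Finset.sum_add_distrib, sum_ite_eq_Ico]

lemma tb_one {p : ℕ} (h : d.getD p false = true) : tb d p = 1 := by
  unfold tb
  rw [if_pos h]

lemma tb_zero {p : ℕ} (h : d.getD p true = false) : tb d p = 0 := by
  unfold tb
  rcases lt_or_ge p d.length with h2 | h2
  · rw [List.getD_eq_getElem _ _ h2] at h ⊢
    rw [h]
    simp
  · rw [List.getD_eq_getElem?_getD, List.getElem?_eq_none h2]
    simp

lemma zb_one {p : ℕ} (h : d.getD p true = false) : zb d p = 1 := by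
  unfold zb
  rw [if_pos h]

lemma zb_zero {p : ℕ} (h : d.getD p false = true) : zb d p = 0 := by
  unfold zb
  rcases lt_or_ge p d.length with h2 | h2
  · rw [List.getD_eq_getElem _ _ h2] at h ⊢
    rw [h]
    simp
  · rw [List.getD_eq_getElem?_getD, List.getElem?_eq_none h2]
    simp

lemma lt_length_of_true {p : ℕ} (h : d.getD p false = true) : p < d.length := by
  by_contra hc
  rw [List.getD_eq_getElem?_getD, List.getElem?_eq_none (by omega)] at h
  simp at h

lemma lt_length_of_false {p : ℕ} (h : d.getD p true = false) : p < d.length := by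
  by_contra hc
  rw [List.getD_eq_getElem?_getD, List.getElem?_eq_none (by omega)] at h
  simp at h

lemma anchor_mv {i₀ : ℕ} (huw : u < w) (hw : w < d.length)
    (ht : d.getD u false = true) (hz : d.getD w true = false) (h : AnchorAt d i₀) :
    AnchorAt (mv d u w) i₀ := by
  have htu : tb d u = 1 := tb_one ht
  have hzw : zb d w = 1 := zb_one hz
  have hzu : zb d u = 0 := zb_zero ht
  have htw : tb d w = 0 := tb_zero hz
  have hu : u < d.length := lt_trans huw hw
  rw [anchor_iff] at h ⊢
  rw [mv_length]
  have h1 := Tr_mv huw.ne hu hw htu htw i₀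
  have h2 := zb_sum_Ico_mv huw.ne hu hw hzu hzw i₀ d.length
  rcases le_or_gt i₀ u with hi | hi
  · rw [if_neg (by omega : ¬ u < i₀), if_neg (by omega : ¬ w < i₀)] at h1
    rw [if_pos (by omega : i₀ ≤ w ∧ w < d.length),
      if_pos (by omega : i₀ ≤ u ∧ u < d.length)] at h2
    omega
  · rcases lt_or_ge w i₀ with hiw | hiw
    · rw [if_pos (by omega : u < i₀), if_pos hiw] at h1
      rw [if_neg (by omega : ¬ (i₀ ≤ u ∧ u < d.length)),
        if_neg (by omega : ¬ (i₀ ≤ w ∧ w < d.length))] at h2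
      omega
    · rw [if_pos (by omega : u < i₀), if_neg (by omega : ¬ w < i₀)] at h1
      rw [if_neg (by omega : ¬ (i₀ ≤ u ∧ u < d.length)),
        if_pos (by omega : i₀ ≤ w ∧ w < d.length)] at h2
      omega

end Move

end LP

namespace LP

lemma Tr_split (d : List Bool) {a b : ℕ} (hab : a ≤ b) :
    Tr d b = Tr d a + ∑ k ∈ Finset.Ico a b, tb d k := by
  unfold Tr
  rw [Finset.range_eq_Ico, Finset.range_eq_Ico]
  exact (Finset.sum_Ico_consecutive (tb d) (Nat.zero_le a) hab).symm

lemma Ico_count (d : List Bool) {a b : ℕ} (hb : b ≤ d.length) :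
    (∑ k ∈ Finset.Ico a b, tb d k) + (∑ k ∈ Finset.Ico a b, zb d k) = b - a := by
  rw [← Finset.sum_add_distrib]
  have h : ∀ k ∈ Finset.Ico a b, tb d k + zb d k = 1 := by
    intro k hk
    rw [add_comm]
    exact zb_add_tb (by simp only [Finset.mem_Ico] at hk; omega)
  rw [Finset.sum_congr rfl h, Finset.sum_const, smul_eq_mul, mul_one, Nat.card_Ico]

lemma mul_pred_mod4 (F : ℕ) : (F * (F - 1)) % 4 = (F % 4) * ((F % 4) - 1) % 4 := by
  obtain ⟨k, r, hr, rfl⟩ : ∃ k r, r < 4 ∧ F = 4 * k + r := ⟨F / 4, F % 4, by omega, by omega⟩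
  have hm : (4 * k + r) % 4 = r := by omega
  rw [hm]
  interval_cases r
  · cases k with
    | zero => norm_num
    | succ j =>
      have : (4 * (j+1) + 0) * ((4 * (j+1) + 0) - 1) = 4 * ((4*j+4) * j + 3 * j + 3) := by
        have h1 : (4 * (j+1) + 0) - 1 = 4*j + 3 := by omega
        rw [h1]
        ring
      omega
  · have : (4 * k + 1) * ((4 * k + 1) - 1) = 4 * ((4 * k + 1) * k) := by
      simp only [Nat.add_sub_cancel]
      ring
    omega
  · have : (4 * k + 2) * ((4 * k + 2) - 1) = 4 * ((4 * k + 1) * k + (2 * k)) + 2 := by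
      have h1 : (4 * k + 2) - 1 = 4 * k + 1 := by omega
      rw [h1]
      ring
    omega
  · have : (4 * k + 3) * ((4 * k + 3) - 1) = 4 * ((4 * k + 2) * k + (3 * k) + 1) + 2 := by
      have h1 : (4 * k + 3) - 1 = 4 * k + 2 := by omega
      rw [h1]
      ring
    omega

lemma even_mul_pred (F : ℕ) : Even (F * (F - 1)) := by
  cases F with
  | zero => simp
  | succ k => simpa [Nat.succ_sub_one, Nat.mul_comm] using Nat.even_mul_succ_self k

set_option maxHeartbeats 1600000 in
lemma step_sign {Z : List Bool} {q m : ℕ} (hm : 1 ≤ m) (hqm : q + 2*m < Z.length)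
    (ht : Z.getD q false = true) (hz : Z.getD (q + 2*m) true = false) :
    ((-1 : ℤ))^(Nv (mv Z q (q + 2*m)) / 2) =
      (-1)^(Nv Z / 2 + ∑ i ∈ Finset.range m, zb Z (q+1+2*i)) := by
  have hqw : q < q + 2*m := by omega
  set n := Z.length with hn
  set w := q + 2*m with hwdef
  have hwn : w < n := hqm
  have hqn : q < n := by omega
  have htu : tb Z q = 1 := tb_one ht
  have hzw : zb Z w = 1 := zb_one hz
  have hzu : zb Z q = 0 := zb_zero ht
  have htw : tb Z w = 0 := tb_zero hz
  have hlen' : (mv Z q w).length = n := mv_length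
  set F := ∑ k ∈ Finset.Ico (q+1) w, zb Z k with hF
  set S := ∑ k ∈ Finset.Ico (q+1) w, zb Z k * (Tr Z k % 2) with hS
  set O := ∑ k ∈ Finset.Ico (q+1) w, zb Z k * ((k - q) % 2) with hO
  -- O equals the range-m sum in the statement
  have hOr : O = ∑ i ∈ Finset.range m, zb Z (q+1+2*i) := by
    rw [hO, Finset.sum_Ico_eq_sum_range]
    have hsz : w - (q+1) = 2*m - 1 := by omega
    rw [hsz, sum_parity_split (fun k => zb Z (q+1+k) * ((q+1+k-q) % 2)) (2*m-1)]
    have h1 : (2*m-1+1)/2 = m := by omega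
    have h2 : (2*m-1)/2 = m - 1 := by omega
    rw [h1, h2]
    have e1 : ∀ i ∈ Finset.range m,
        zb Z (q+1+2*i) * ((q+1+2*i-q) % 2) = zb Z (q+1+2*i) := by
      intro i _
      have : (q+1+2*i-q) % 2 = 1 := by omega
      rw [this, mul_one]
    have e2 : ∀ i ∈ Finset.range (m-1),
        zb Z (q+1+(2*i+1)) * ((q+1+(2*i+1)-q) % 2) = 0 := by
      intro i _
      have : (q+1+(2*i+1)-q) % 2 = 0 := by omega
      rw [this, mul_zero]
    rw [Finset.sum_congr rfl e1, Finset.sum_congr rfl e2, Finset.sum_const_zero, add_zero]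
  -- split a sum over range n into five pieces
  have splitsum : ∀ g : ℕ → ℕ, ∑ p ∈ Finset.range n, g p =
      (∑ p ∈ Finset.Ico 0 q, g p) + g q + (∑ p ∈ Finset.Ico (q+1) w, g p) + g w +
        (∑ p ∈ Finset.Ico (w+1) n, g p) := by
    intro g
    have sing : ∀ x : ℕ, Finset.Ico x (x+1) = {x} := by
      intro x
      ext y
      simp only [Finset.mem_Ico, Finset.mem_singleton]
      omega
    have s1 : Finset.Ico q (q+1) = {q} := sing q
    have s2 : Finset.Ico w (w+1) = {w} := sing w
    rw [Finset.range_eq_Ico,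
      ← Finset.sum_Ico_consecutive g (Nat.zero_le q) (by omega : q ≤ n),
      ← Finset.sum_Ico_consecutive g (by omega : q ≤ q+1) (by omega : q+1 ≤ n),
      ← Finset.sum_Ico_consecutive g (by omega : q+1 ≤ w) (by omega : w ≤ n),
      ← Finset.sum_Ico_consecutive g (by omega : w ≤ w+1) (by omega : w+1 ≤ n),
      s1, s2, Finset.sum_singleton, Finset.sum_singleton]
    ring
  have e1 : Nv Z = (∑ p ∈ Finset.Ico 0 q, zb Z p * (Tr Z p % 2)) + 0 + S + (Tr Z w % 2) +
      (∑ p ∈ Finset.Ico (w+1) n, zb Z p * (Tr Z p % 2)) := by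
    rw [Nv, ← hn, splitsum (fun p => zb Z p * (Tr Z p % 2)), hzu, hzw]
    ring
  have trmv := Tr_mv (d := Z) (by omega : q ≠ w) hqn hwn htu htw
  have trlow : ∀ p, p ≤ q → Tr (mv Z q w) p = Tr Z p := by
    intro p hp
    have := trmv p
    rw [if_neg (by omega : ¬ q < p), if_neg (by omega : ¬ w < p)] at this
    omega
  have trmid : ∀ p, q < p → p ≤ w → Tr (mv Z q w) p + 1 = Tr Z p := by
    intro p h1 h2
    have := trmv p
    rw [if_pos h1, if_neg (by omega : ¬ w < p)] at this
    omega
  have trhigh : ∀ p, w < p → Tr (mv Z q w) p = Tr Z p := by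
    intro p hp
    have := trmv p
    rw [if_pos (by omega : q < p), if_pos hp] at this
    omega
  have e2 : Nv (mv Z q w) = (∑ p ∈ Finset.Ico 0 q, zb Z p * (Tr Z p % 2)) + (Tr Z q % 2) +
      (∑ p ∈ Finset.Ico (q+1) w, zb Z p * (Tr (mv Z q w) p % 2)) + 0 +
      (∑ p ∈ Finset.Ico (w+1) n, zb Z p * (Tr Z p % 2)) := by
    rw [Nv, hlen', splitsum (fun p => zb (mv Z q w) p * (Tr (mv Z q w) p % 2))]
    congr 1
    congr 1
    congr 1
    congr 1
    · refine Finset.sum_congr rfl fun p hp => ?_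
      simp only [Finset.mem_Ico] at hp
      rw [zb_mv_other (by omega) (by omega), trlow p (by omega)]
    · rw [zb_mv_self (by omega) hqn, trlow q le_rfl, one_mul]
    · refine Finset.sum_congr rfl fun p hp => ?_
      simp only [Finset.mem_Ico] at hp
      rw [zb_mv_other (by omega) (by omega)]
    · rw [zb_mv_w hwn, zero_mul]
    · refine Finset.sum_congr rfl fun p hp => ?_
      simp only [Finset.mem_Ico] at hp
      rw [zb_mv_other (by omega) (by omega), trhigh p (by omega)]
  -- middle-piece comparison
  have hmid : (∑ p ∈ Finset.Ico (q+1) w, zb Z p * (Tr (mv Z q w) p % 2)) + 2*S = F + S := by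
    have per : ∀ p ∈ Finset.Ico (q+1) w,
        zb Z p * (Tr (mv Z q w) p % 2) + 2*(zb Z p * (Tr Z p % 2)) =
          zb Z p + zb Z p * (Tr Z p % 2) := by
      intro p hp
      simp only [Finset.mem_Ico] at hp
      have htr := trmid p (by omega) (by omega)
      have hzb := zb_le_one Z p
      interval_cases h : (zb Z p)
      · simp
      · simp only [one_mul]
        omega
    have sum_eq := Finset.sum_congr rfl per
    rw [Finset.sum_add_distrib, Finset.sum_add_distrib, ← Finset.mul_sum] at sum_eq
    rw [← hS, ← hF] at sum_eq
    omega
  have star : Nv (mv Z q w) + 2*S + (Tr Z w % 2) = Nv Z + (Tr Z q % 2) + F := by omega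
  -- Tr at w
  have hT2 : Tr Z w + F = Tr Z q + 2*m := by
    have h1 : Tr Z w = Tr Z (q+1) + ∑ k ∈ Finset.Ico (q+1) w, tb Z k := Tr_split Z (by omega)
    have h2 : Tr Z (q+1) = Tr Z q + tb Z q := Finset.sum_range_succ _ _
    have h3 := Ico_count Z (a := q+1) (b := w) (by omega)
    omega
  -- the parity (clover) identity
  set A := (Finset.Ico (q+1) w).filter (fun p => Z.getD p true = false) with hA
  set Gp := ∑ p ∈ A, (A.filter (· < p)).card with hGp
  have hcard : A.card = F := by
    rw [hA, hF]
    rw [Finset.card_filter]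
    rfl
  have hGp2 : 2 * Gp = F * (F - 1) := by
    have := pairs_sum A
    rw [hcard] at this
    have he := even_mul_pred F
    obtain ⟨c, hc⟩ := he
    omega
  -- sums over A
  have hSA : S = ∑ p ∈ A, (Tr Z p % 2) := by
    rw [hS, hA, Finset.sum_filter]
    refine Finset.sum_congr rfl fun p _ => ?_
    unfold zb
    split <;> simp
  have hOA : O = ∑ p ∈ A, ((p - q) % 2) := by
    rw [hO, hA, Finset.sum_filter]
    refine Finset.sum_congr rfl fun p _ => ?_
    unfold zb
    split <;> simp
  -- per-element identity on A
  have hID : ∀ p ∈ A, Tr Z p + (A.filter (· < p)).card + q = Tr Z q + p := by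
    intro p hp
    rw [hA, Finset.mem_filter, Finset.mem_Ico] at hp
    obtain ⟨⟨hp1, hp2⟩, hp3⟩ := hp
    have h1 : Tr Z p = Tr Z (q+1) + ∑ k ∈ Finset.Ico (q+1) p, tb Z k := Tr_split Z (by omega)
    have h2 : Tr Z (q+1) = Tr Z q + tb Z q := Finset.sum_range_succ _ _
    have h3 := Ico_count Z (a := q+1) (b := p) (by omega)
    have h4 : (∑ k ∈ Finset.Ico (q+1) p, zb Z k) = (A.filter (· < p)).card := by
      have hset : (Finset.Ico (q+1) p).filter (fun k => Z.getD k true = false) =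
          A.filter (· < p) := by
        rw [hA, Finset.filter_filter]
        ext x
        simp only [Finset.mem_filter, Finset.mem_Ico]
        constructor
        · rintro ⟨⟨hx1, hx2⟩, hx3⟩
          exact ⟨⟨hx1, by omega⟩, hx3, by omega⟩
        · rintro ⟨⟨hx1, hx2⟩, hx3, hx4⟩
          exact ⟨⟨hx1, by omega⟩, hx3⟩
      rw [← hset, Finset.card_filter]
      refine Finset.sum_congr rfl fun k _ => ?_
      simp [zb]
    omega
  have clover : (S + O + Tr Z q * F + Gp) % 2 = 0 := by
    have htwo : (2 : ZMod 2) = 0 := by decide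
    have hper : ∀ p ∈ A, ((Tr Z p % 2 : ℕ) : ZMod 2) + (((p - q) % 2 : ℕ) : ZMod 2) =
        ((Tr Z q : ℕ) : ZMod 2) + (((A.filter (· < p)).card : ℕ) : ZMod 2) := by
      intro p hp
      have hid := hID p hp
      have hpq : q ≤ p := by
        rw [hA, Finset.mem_filter, Finset.mem_Ico] at hp
        omega
      have hcast : ((Tr Z p : ℕ) : ZMod 2) + (((A.filter (· < p)).card : ℕ) : ZMod 2)
          + ((q : ℕ) : ZMod 2) = ((Tr Z q : ℕ) : ZMod 2) + ((p : ℕ) : ZMod 2) := by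
        have := congrArg (fun x : ℕ => (x : ZMod 2)) hid
        push_cast at this
        linear_combination this
      have hsub : (((p - q) : ℕ) : ZMod 2) = ((p : ℕ) : ZMod 2) - ((q : ℕ) : ZMod 2) := by
        push_cast [hpq]
        ring
      rw [ZMod.natCast_mod, ZMod.natCast_mod, hsub]
      linear_combination hcast + (((p:ZMod 2)) - ((q:ZMod 2)) -
        (((A.filter (· < p)).card : ℕ) : ZMod 2)) * htwo
    have hS2 : ((S : ℕ) : ZMod 2) = ∑ p ∈ A, ((Tr Z p % 2 : ℕ) : ZMod 2) := by
      rw [hSA]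
      push_cast
      rfl
    have hO2 : ((O : ℕ) : ZMod 2) = ∑ p ∈ A, (((p - q) % 2 : ℕ) : ZMod 2) := by
      rw [hOA]
      push_cast
      rfl
    have hG2 : ((Gp : ℕ) : ZMod 2) = ∑ p ∈ A, (((A.filter (· < p)).card : ℕ) : ZMod 2) := by
      rw [hGp]
      push_cast
      rfl
    have hsum : ((S : ℕ) : ZMod 2) + ((O : ℕ) : ZMod 2) =
        ((F : ℕ) : ZMod 2) * ((Tr Z q : ℕ) : ZMod 2) + ((Gp : ℕ) : ZMod 2) := by
      rw [hS2, hO2, ← Finset.sum_add_distrib, Finset.sum_congr rfl hper,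
        Finset.sum_add_distrib, Finset.sum_const, ← hG2, nsmul_eq_mul, hcard]
    have main : ((S + O + Tr Z q * F + Gp : ℕ) : ZMod 2) = 0 := by
      push_cast
      push_cast at hsum
      linear_combination hsum + ((Tr Z q : ZMod 2) * ((F : ℕ) : ZMod 2) + ((Gp : ℕ) : ZMod 2)) * htwo
    rw [ZMod.natCast_eq_zero_iff] at main
    omega
  have hX : (Tr Z q * F) % 2 = ((Tr Z q % 2) * (F % 2)) % 2 := Nat.mul_mod _ _ _
  have hP4 := mul_pred_mod4 F
  apply negpow
  rw [← hOr]
  have hF4 : F % 4 = 0 ∨ F % 4 = 1 ∨ F % 4 = 2 ∨ F % 4 = 3 := by omega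
  have hT1 : Tr Z q % 2 = 0 ∨ Tr Z q % 2 = 1 := by omega
  rcases hT1 with h1 | h1 <;> rcases hF4 with h4|h4|h4|h4 <;>
      rw [h4] at hP4 <;> rw [h1] at hX <;> norm_num at hP4 hX ⊢ <;>
    omega


lemma getD_irrel {l : List Bool} {p : ℕ} (h : p < l.length) (d d' : Bool) :
    l.getD p d = l.getD p d' := by
  rw [List.getD_eq_getElem _ _ h, List.getD_eq_getElem _ _ h]

lemma itl_length (d0 d1 : List Bool) (t : ℕ) : (itl d0 d1 t).length = 2*t := by
  simp [itl]

lemma itl_getD {d0 d1 : List Bool} {t v : ℕ} (hv : v < 2*t) (dflt : Bool) :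
    (itl d0 d1 t).getD v dflt = (if v % 2 = 0 then d0 else d1).getD (v/2) false := by
  rw [itl, List.getD_eq_getElem?_getD, List.getElem?_map, List.getElem?_range hv]
  rfl

lemma itl_getD_evenF {d0 d1 : List Bool} {t k : ℕ} (hk : k < t) :
    (itl d0 d1 t).getD (2*k) false = d0.getD k false := by
  rw [itl_getD (by omega) false]
  have e1 : (2*k) % 2 = 0 := by omega
  have e2 : (2*k) / 2 = k := by omega
  rw [e1, e2, if_pos rfl]

lemma itl_getD_oddF {d0 d1 : List Bool} {t k : ℕ} (hk : k < t) :
    (itl d0 d1 t).getD (2*k+1) false = d1.getD k false := by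
  rw [itl_getD (by omega) false]
  have e1 : (2*k+1) % 2 = 1 := by omega
  have e2 : (2*k+1) / 2 = k := by omega
  rw [e1, e2, if_neg (by omega)]

lemma itl_getD_even {d0 d1 : List Bool} {t u : ℕ} (h0 : d0.length = t) (hu : u < t)
    (dflt : Bool) : (itl d0 d1 t).getD (2*u) dflt = d0.getD u dflt := by
  rw [getD_irrel (by rw [itl_length]; omega) dflt false, itl_getD_evenF hu,
    getD_irrel (by omega) false dflt]

lemma itl_getD_odd {d0 d1 : List Bool} {t u : ℕ} (h1 : d1.length = t) (hu : u < t)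
    (dflt : Bool) : (itl d0 d1 t).getD (2*u+1) dflt = d1.getD u dflt := by
  rw [getD_irrel (by rw [itl_length]; omega) dflt false, itl_getD_oddF hu,
    getD_irrel (by omega) false dflt]

lemma zb_itl_even {d0 d1 : List Bool} {t u : ℕ} (h0 : d0.length = t) (hu : u < t) :
    zb (itl d0 d1 t) (2*u) = zb d0 u := by
  unfold zb
  rw [itl_getD_even h0 hu]

lemma zb_itl_odd {d0 d1 : List Bool} {t u : ℕ} (h1 : d1.length = t) (hu : u < t) :
    zb (itl d0 d1 t) (2*u+1) = zb d1 u := by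
  unfold zb
  rw [itl_getD_odd h1 hu]

lemma itl_mv_left {d0 d1 : List Bool} {t u w : ℕ} (h0 : d0.length = t) (huw : u < w)
    (hw : w < t) :
    itl (mv d0 u w) d1 t = mv (itl d0 d1 t) (2*u) (2*w) := by
  have hu : u < t := by omega
  have hlen : (itl (mv d0 u w) d1 t).length = (mv (itl d0 d1 t) (2*u) (2*w)).length := by
    rw [itl_length, mv_length, itl_length]
  apply List.ext_getElem hlen
  intro v hv1 hv2
  rw [itl_length] at hv1
  rw [← List.getD_eq_getElem _ false (by rwa [itl_length]),
      ← List.getD_eq_getElem _ false (by rwa [mv_length, itl_length])]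
  rcases Nat.even_or_odd v with ⟨k, hk⟩ | ⟨k, hk⟩
  · have hkt : k < t := by omega
    have hk2 : v = 2*k := by omega
    subst hk2
    rw [itl_getD_evenF hkt]
    rcases eq_or_ne k u with rfl | hku
    · rw [mv, getD_set_ne _ _ (by omega), getD_set_eq _ _ (by omega)]
      rw [mv, getD_set_ne _ _ (by omega),
        getD_set_eq _ _ (by rw [itl_length]; omega)]
    · rcases eq_or_ne k w with rfl | hkw
      · rw [mv, getD_set_eq _ _ (by rw [List.length_set]; omega)]
        rw [mv, getD_set_eq _ _ (by rw [List.length_set, itl_length]; omega)]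
      · rw [mv, getD_set_ne _ _ (Ne.symm hkw), getD_set_ne _ _ (Ne.symm hku)]
        rw [mv, getD_set_ne _ _ (by omega), getD_set_ne _ _ (by omega)]
        rw [itl_getD_evenF hkt]
  · have hkt : k < t := by omega
    have hk2 : v = 2*k+1 := by omega
    subst hk2
    rw [itl_getD_oddF hkt]
    rw [mv, getD_set_ne _ _ (by omega), getD_set_ne _ _ (by omega)]
    rw [itl_getD_oddF hkt]

lemma itl_mv_right {d0 d1 : List Bool} {t u w : ℕ} (h1 : d1.length = t) (huw : u < w)
    (hw : w < t) :
    itl d0 (mv d1 u w) t = mv (itl d0 d1 t) (2*u+1) (2*w+1) := by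
  have hu : u < t := by omega
  have hlen : (itl d0 (mv d1 u w) t).length = (mv (itl d0 d1 t) (2*u+1) (2*w+1)).length := by
    rw [itl_length, mv_length, itl_length]
  apply List.ext_getElem hlen
  intro v hv1 hv2
  rw [itl_length] at hv1
  rw [← List.getD_eq_getElem _ false (by rwa [itl_length]),
      ← List.getD_eq_getElem _ false (by rwa [mv_length, itl_length])]
  rcases Nat.even_or_odd v with ⟨k, hk⟩ | ⟨k, hk⟩
  · have hkt : k < t := by omega
    have hk2 : v = 2*k := by omega
    subst hk2
    rw [itl_getD_evenF hkt]
    rw [mv, getD_set_ne _ _ (by omega), getD_set_ne _ _ (by omega)]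
    rw [itl_getD_evenF hkt]
  · have hkt : k < t := by omega
    have hk2 : v = 2*k+1 := by omega
    subst hk2
    rw [itl_getD_oddF hkt]
    rcases eq_or_ne k u with rfl | hku
    · rw [mv, getD_set_ne _ _ (by omega), getD_set_eq _ _ (by omega)]
      rw [mv, getD_set_ne _ _ (by omega),
        getD_set_eq _ _ (by rw [itl_length]; omega)]
    · rcases eq_or_ne k w with rfl | hkw
      · rw [mv, getD_set_eq _ _ (by rw [List.length_set]; omega)]
        rw [mv, getD_set_eq _ _ (by rw [List.length_set, itl_length]; omega)]
      · rw [mv, getD_set_ne _ _ (by omega), getD_set_ne _ _ (by omega)]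
        rw [mv, getD_set_ne _ _ (by omega), getD_set_ne _ _ (by omega)]
        rw [itl_getD_oddF hkt]

lemma count_split (l : List Bool) : l.count false + l.count true = l.length := by
  rw [count_false_eq, count_true_eq, ← Finset.sum_add_distrib]
  have h : ∀ k ∈ Finset.range l.length, zb l k + tb l k = 1 := fun k hk =>
    zb_add_tb (Finset.mem_range.mp hk)
  rw [Finset.sum_congr rfl h, Finset.sum_const, smul_eq_mul, mul_one, Finset.card_range]

lemma anchor_count {d : List Bool} {i₀ : ℕ} (h : AnchorAt d i₀) :
    d.count false = min i₀ d.length := by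
  have hsplit : (d.take i₀).count false + (d.drop i₀).count false = d.count false := by
    rw [← List.count_append, List.take_append_drop]
  have htk := count_split (d.take i₀)
  rw [List.length_take] at htk
  rw [AnchorAt] at h
  omega

lemma sorted_bool_eq {d : List Bool} (h : d.Pairwise (· ≤ ·)) :
    d = List.replicate (d.count false) false ++ List.replicate (d.count true) true := by
  induction d with
  | nil => simp
  | cons b l ih =>
    rw [List.pairwise_cons] at h
    obtain ⟨hb, hl⟩ := h
    cases b
    · have hc1 : (false :: l).count false = l.count false + 1 := by simp
      have hc2 : (false :: l).count true = l.count true := by simp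
      rw [hc1, hc2, List.replicate_succ, List.cons_append]
      exact congrArg _ (ih hl)
    · have hall : ∀ x ∈ l, x = true := by
        intro x hx
        have := hb x hx
        revert this
        cases x <;> simp
      have hrep : l = List.replicate l.length true := List.eq_replicate_length.mpr hall
      have hc1 : (true :: l).count false = 0 := by
        rw [List.count_eq_zero]
        intro hmem
        rcases List.mem_cons.mp hmem with h | h
        · exact absurd h (by simp)
        · have := hall false h
          simp at this
      have hcl : l.count true = l.length := by
        conv_lhs => rw [hrep]
        exact List.count_replicate_self
      have hc2 : (true :: l).count true = l.length + 1 := by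
        simp [hcl]
      rw [hc1, hc2]
      simp only [List.replicate_zero, List.nil_append, List.replicate_succ]
      exact congrArg _ hrep

lemma sorted_FT (a b : ℕ) :
    (List.replicate a false ++ List.replicate b true).Pairwise (· ≤ ·) := by
  rw [List.pairwise_append]
  refine ⟨?_, ?_, ?_⟩
  · rw [List.pairwise_replicate]
    right
    exact le_refl _
  · rw [List.pairwise_replicate]
    right
    exact le_refl _
  · intro x hx y hy
    rw [List.eq_of_mem_replicate hx, List.eq_of_mem_replicate hy]
    simp

lemma getD_FT {a b k : ℕ} (dflt : Bool) (hk : k < a + b) :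
    (List.replicate a false ++ List.replicate b true).getD k dflt = decide (a ≤ k) := by
  have hd : decide (a ≤ k) = if a ≤ k then true else false := by
    by_cases h : a ≤ k <;> simp [h]
  rcases lt_or_ge k a with h | h
  · rw [List.getD_append _ _ _ _ (by simpa using h),
      List.getD_eq_getElem _ _ (by simpa using h), List.getElem_replicate, hd,
      if_neg (by omega)]
  · rw [List.getD_append_right _ _ _ _ (by simpa using h),
      List.getD_eq_getElem _ _ (by simp; omega), List.getElem_replicate, hd, if_pos h]

lemma Nv_FT (a b : ℕ) : Nv (List.replicate a false ++ List.replicate b true) = 0 := by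
  unfold Nv
  apply Finset.sum_eq_zero
  intro p hp
  rw [List.length_append, List.length_replicate, List.length_replicate] at hp
  rw [Finset.mem_range] at hp
  rcases lt_or_ge p a with h | h
  · have htr : Tr (List.replicate a false ++ List.replicate b true) p = 0 := by
      unfold Tr
      apply Finset.sum_eq_zero
      intro k hk
      rw [Finset.mem_range] at hk
      unfold tb
      rw [getD_FT _ (by omega)]
      have : decide (a ≤ k) = false := by
        simp
        omega
      rw [this]
      simp
    rw [htr]
    simp
  · have hzb : zb (List.replicate a false ++ List.replicate b true) p = 0 := by
      unfold zb
      rw [getD_FT _ (by omega)]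
      have : decide (a ≤ p) = true := by simp [h]
      rw [this]
      simp
    rw [hzb, zero_mul]

section Pad

variable {δ : List Bool} {P Q : ℕ}

lemma pad_length (P Q : ℕ) (δ : List Bool) :
    (List.replicate P false ++ δ ++ List.replicate Q true).length = P + δ.length + Q := by
  rw [List.length_append, List.length_append, List.length_replicate, List.length_replicate]

lemma pad_getD_mid (dflt : Bool) {u : ℕ} (hu : u < δ.length) :
    (List.replicate P false ++ δ ++ List.replicate Q true).getD (P+u) dflt = δ.getD u dflt := by
  rw [List.getD_append _ _ _ _ (by simp; omega),
    List.getD_append_right _ _ _ _ (by simp),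
    List.length_replicate, Nat.add_sub_cancel_left]

lemma pad_getD_low (dflt : Bool) {u : ℕ} (hu : u < P) :
    (List.replicate P false ++ δ ++ List.replicate Q true).getD u dflt = false := by
  rw [List.getD_append _ _ _ _ (by simp; omega),
    List.getD_append _ _ _ _ (by simp; omega),
    List.getD_eq_getElem _ _ (by simp; omega), List.getElem_replicate]

lemma pad_getD_high (dflt : Bool) {u : ℕ} (hu1 : P + δ.length ≤ u)
    (hu2 : u < P + δ.length + Q) :
    (List.replicate P false ++ δ ++ List.replicate Q true).getD u dflt = true := by
  rw [List.getD_append_right _ _ _ _ (by simp; omega),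
    List.getD_eq_getElem _ _ (by simp; omega), List.getElem_replicate]

lemma pad_set {u : ℕ} (x : Bool) (hu : u < δ.length) :
    (List.replicate P false ++ δ ++ List.replicate Q true).set (P+u) x =
      List.replicate P false ++ δ.set u x ++ List.replicate Q true := by
  rw [List.set_append, if_pos (by simp only [List.length_append, List.length_replicate]; omega),
    List.set_append, if_neg (by simp only [List.length_replicate]; omega),
    List.length_replicate, Nat.add_sub_cancel_left]

lemma zb_pad {u : ℕ} (hu : u < δ.length) :
    zb (List.replicate P false ++ δ ++ List.replicate Q true) (P+u) = zb δ u := by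
  unfold zb
  rw [pad_getD_mid _ hu]

lemma tb_pad {u : ℕ} (hu : u < δ.length) :
    tb (List.replicate P false ++ δ ++ List.replicate Q true) (P+u) = tb δ u := by
  unfold tb
  rw [pad_getD_mid _ hu]

lemma sorted_pad_iff (P Q : ℕ) (δ : List Bool) :
    (List.replicate P false ++ δ ++ List.replicate Q true).Pairwise (· ≤ ·) ↔
      δ.Pairwise (· ≤ ·) := by
  rw [List.append_assoc, List.pairwise_append, List.pairwise_append]
  constructor
  · rintro ⟨-, ⟨h, -, -⟩, -⟩
    exact h
  · intro h
    refine ⟨?_, ⟨h, ?_, ?_⟩, ?_⟩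
    · rw [List.pairwise_replicate]
      right
      exact le_refl _
    · rw [List.pairwise_replicate]
      right
      exact le_refl _
    · intro a _ b hb
      rw [List.eq_of_mem_replicate hb]
      exact Bool.le_true a
    · intro a ha b _
      rw [List.eq_of_mem_replicate ha]
      exact Bool.false_le b

lemma pad_mv {u m : ℕ} (hu : u + m < δ.length) :
    ((List.replicate P false ++ δ ++ List.replicate Q true).set (P+u) false).set (P+u+m) true =
      List.replicate P false ++ ((δ.set u false).set (u+m) true) ++ List.replicate Q true := by
  rw [pad_set false (by omega), show P+u+m = P+(u+m) by omega,
    pad_set true (by rw [List.length_set]; omega)]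

lemma sum_pad (δ : List Bool) (m P Q : ℕ) (G H : List Bool → ℤ)
    (hGH : ∀ u, u + m < δ.length →
      G (List.replicate P false ++ ((δ.set u false).set (u+m) true) ++ List.replicate Q true) =
        H ((δ.set u false).set (u+m) true)) :
    (∑ q ∈ Finset.range (List.replicate P false ++ δ ++ List.replicate Q true).length,
      if q + m < (List.replicate P false ++ δ ++ List.replicate Q true).length ∧
          (List.replicate P false ++ δ ++ List.replicate Q true).getD q false = true ∧
          (List.replicate P false ++ δ ++ List.replicate Q true).getD (q+m) true = false then
        (-1 : ℤ) ^ ((((List.replicate P false ++ δ ++ List.replicate Q true).drop (q+1)).take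
            (m-1)).count false) *
          G (((List.replicate P false ++ δ ++ List.replicate Q true).set q false).set (q+m) true)
      else 0) =
    ∑ u ∈ Finset.range δ.length,
      if u + m < δ.length ∧ δ.getD u false = true ∧ δ.getD (u+m) true = false then
        (-1 : ℤ) ^ (((δ.drop (u+1)).take (m-1)).count false) * H ((δ.set u false).set (u+m) true)
      else 0 := by
  have hN : (List.replicate P false ++ δ ++ List.replicate Q true).length =
      P + δ.length + Q := pad_length P Q δ
  rw [hN]
  have hzero : ∀ q, q < P ∨ P + δ.length ≤ q →
      (if q + m < P + δ.length + Q ∧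
          (List.replicate P false ++ δ ++ List.replicate Q true).getD q false = true ∧
          (List.replicate P false ++ δ ++ List.replicate Q true).getD (q+m) true = false then
        (-1 : ℤ) ^ ((((List.replicate P false ++ δ ++ List.replicate Q true).drop (q+1)).take
            (m-1)).count false) *
          G (((List.replicate P false ++ δ ++ List.replicate Q true).set q false).set (q+m) true)
      else 0) = 0 := by
    intro q hq
    rw [if_neg]
    rintro ⟨h1, h2, h3⟩
    rcases hq with hq | hq
    · rw [pad_getD_low _ hq] at h2
      exact absurd h2 (by simp)
    · rw [pad_getD_high _ (by omega) (by omega)] at h3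
      exact absurd h3 (by simp)
  rw [Finset.range_eq_Ico]
  rw [← Finset.sum_Ico_consecutive _ (Nat.zero_le P) (by omega : P ≤ P + δ.length + Q),
    ← Finset.sum_Ico_consecutive _ (by omega : P ≤ P + δ.length)
      (by omega : P + δ.length ≤ P + δ.length + Q)]
  have hz1 : ∀ q ∈ Finset.Ico 0 P, (if q + m < P + δ.length + Q ∧ _ ∧ _ then _ else (0:ℤ)) = 0 :=
    fun q hq => hzero q (Or.inl (by simp only [Finset.mem_Ico] at hq; omega))
  rw [Finset.sum_congr rfl (fun q hq => hzero q (Or.inl (by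
        simp only [Finset.mem_Ico] at hq; omega))),
    Finset.sum_congr rfl (fun q (hq : q ∈ Finset.Ico (P + δ.length) (P + δ.length + Q)) =>
      hzero q (Or.inr (by simp only [Finset.mem_Ico] at hq; omega))),
    Finset.sum_const_zero, Finset.sum_const_zero, zero_add, add_zero]
  rw [Finset.sum_Ico_eq_sum_range, Nat.add_sub_cancel_left]
  refine Finset.sum_congr rfl fun u hu => ?_
  rw [Finset.mem_range] at hu
  by_cases hc : u + m < δ.length ∧ δ.getD u false = true ∧ δ.getD (u+m) true = false
  · obtain ⟨h1, h2, h3⟩ := hc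
    have hm1 : 1 ≤ m := by
      by_contra hm0
      have hz := zb_zero h2
      have ho := zb_one (by rw [show u + m = u by omega] at h3; exact h3)
      omega
    rw [if_pos ⟨by omega, by rw [pad_getD_mid _ (by omega)]; exact h2,
      by rw [show P+u+m = P+(u+m) by omega, pad_getD_mid _ (by omega)]; exact h3⟩,
      if_pos ⟨h1, h2, h3⟩]
    have hcnt : (((List.replicate P false ++ δ ++ List.replicate Q true).drop (P+u+1)).take
        (m-1)).count false = ((δ.drop (u+1)).take (m-1)).count false := by
      rw [count_false_drop_take (by rw [hN]; omega),
        count_false_drop_take (by omega)]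
      refine Finset.sum_congr rfl fun k hk => ?_
      rw [Finset.mem_range] at hk
      rw [show P+u+1+k = P+(u+1+k) by omega, zb_pad (by omega)]
    rw [hcnt, pad_mv (by omega), hGH u h1]
  · rw [if_neg hc, if_neg]
    rintro ⟨g1, g2, g3⟩
    apply hc
    have hul : u + m < δ.length := by
      by_contra hbig
      rw [show P+u+m = P+(u+m) by omega,
        pad_getD_high _ (by omega) (by omega)] at g3
      exact absurd g3 (by simp)
    refine ⟨hul, ?_, ?_⟩
    · rw [pad_getD_mid _ (by omega)] at g2
      exact g2
    · rw [show P+u+m = P+(u+m) by omega, pad_getD_mid _ (by omega)] at g3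
      exact g3

lemma chiW_pad (ν : List ℕ) : ∀ (P Q : ℕ) (δ : List Bool),
    chiW (List.replicate P false ++ δ ++ List.replicate Q true) ν = chiW δ ν := by
  induction ν with
  | nil =>
    intro P Q δ
    simp only [chiW]
    simp only [sorted_pad_iff]
  | cons m rest ih =>
    intro P Q δ
    simp only [chiW]
    exact sum_pad δ m P Q (fun x => chiW x rest) (fun x => chiW x rest)
      (fun u hu => ih P Q _)

lemma psi2_pad (ν : List ℕ) : ∀ (P0 Q0 P1 Q1 : ℕ) (δ0 δ1 : List Bool),
    psi2 (List.replicate P0 false ++ δ0 ++ List.replicate Q0 true)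
      (List.replicate P1 false ++ δ1 ++ List.replicate Q1 true) ν = psi2 δ0 δ1 ν := by
  induction ν with
  | nil =>
    intro P0 Q0 P1 Q1 δ0 δ1
    simp only [psi2]
    simp only [sorted_pad_iff]
  | cons m rest ih =>
    intro P0 Q0 P1 Q1 δ0 δ1
    simp only [psi2]
    congr 1
    · exact sum_pad δ0 m P0 Q0
        (fun x => psi2 x (List.replicate P1 false ++ δ1 ++ List.replicate Q1 true) rest)
        (fun x => psi2 x δ1 rest) (fun u hu => ih P0 Q0 P1 Q1 _ δ1)
    · exact sum_pad δ1 m P1 Q1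
        (fun x => psi2 (List.replicate P0 false ++ δ0 ++ List.replicate Q0 true) x rest)
        (fun x => psi2 δ0 x rest) (fun u hu => ih P0 Q0 P1 Q1 δ0 _)

lemma Tr_pad (u : ℕ) (hu : u ≤ δ.length) :
    Tr (List.replicate P false ++ δ ++ List.replicate Q true) (P+u) = Tr δ u := by
  unfold Tr
  rw [show P + u = P + u from rfl]
  rw [Finset.range_eq_Ico, ← Finset.sum_Ico_consecutive _ (Nat.zero_le P) (by omega : P ≤ P + u)]
  have e1 : ∀ k ∈ Finset.Ico 0 P,
      tb (List.replicate P false ++ δ ++ List.replicate Q true) k = 0 := by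
    intro k hk
    simp only [Finset.mem_Ico] at hk
    unfold tb
    rw [pad_getD_low _ (by omega)]
    simp
  rw [Finset.sum_congr rfl e1, Finset.sum_const_zero, zero_add,
    Finset.sum_Ico_eq_sum_range, Nat.add_sub_cancel_left]
  refine Finset.sum_congr rfl fun k hk => ?_
  simp only [Finset.mem_range, Finset.mem_Ico] at hk
  exact tb_pad (by omega)

lemma Nv_pad (P Q : ℕ) (δ : List Bool) :
    Nv (List.replicate P false ++ δ ++ List.replicate Q true) = Nv δ := by
  unfold Nv
  rw [pad_length]
  rw [Finset.range_eq_Ico, ← Finset.sum_Ico_consecutive _ (Nat.zero_le P)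
      (by omega : P ≤ P + δ.length + Q),
    ← Finset.sum_Ico_consecutive _ (by omega : P ≤ P + δ.length)
      (by omega : P + δ.length ≤ P + δ.length + Q)]
  have e1 : ∀ p ∈ Finset.Ico 0 P,
      zb (List.replicate P false ++ δ ++ List.replicate Q true) p *
        (Tr (List.replicate P false ++ δ ++ List.replicate Q true) p % 2) = 0 := by
    intro p hp
    simp only [Finset.mem_Ico] at hp
    have htr : Tr (List.replicate P false ++ δ ++ List.replicate Q true) p = 0 := by
      unfold Tr
      apply Finset.sum_eq_zero
      intro k hk
      rw [Finset.mem_range] at hk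
      unfold tb
      rw [pad_getD_low _ (by omega)]
      simp
    rw [htr]
    simp
  have e2 : ∀ p ∈ Finset.Ico (P + δ.length) (P + δ.length + Q),
      zb (List.replicate P false ++ δ ++ List.replicate Q true) p *
        (Tr (List.replicate P false ++ δ ++ List.replicate Q true) p % 2) = 0 := by
    intro p hp
    simp only [Finset.mem_Ico] at hp
    have hzb : zb (List.replicate P false ++ δ ++ List.replicate Q true) p = 0 := by
      unfold zb
      rw [pad_getD_high _ (by omega) (by omega)]
      simp
    rw [hzb, zero_mul]
  rw [Finset.sum_congr rfl e1, Finset.sum_congr rfl e2, Finset.sum_const_zero,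
    Finset.sum_const_zero, zero_add, add_zero, Finset.sum_Ico_eq_sum_range,
    Nat.add_sub_cancel_left]
  refine Finset.sum_congr rfl fun u hu => ?_
  simp only [Finset.mem_range, Finset.mem_Ico] at hu
  rw [zb_pad (by omega), Tr_pad u (by omega)]


end Pad

lemma Nv_append_TF (δ : List Bool) (r : ℕ) :
    Nv (δ ++ (List.replicate r true ++ [false])) = Nv δ + ((δ.count true) + r) % 2 := by
  set X := δ ++ (List.replicate r true ++ [false]) with hX
  set n := δ.length with hn
  have hlen : X.length = n + r + 1 := by
    rw [hX]
    simp only [List.length_append, List.length_replicate, List.length_cons, List.length_nil]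
    omega
  have hgd : ∀ p < n, ∀ dflt, X.getD p dflt = δ.getD p dflt := by
    intro p hp dflt
    rw [hX, List.getD_append _ _ _ _ (by omega)]
  have hgm : ∀ p, n ≤ p → p < n + r → X.getD p true = true := by
    intro p h1 h2
    rw [hX, List.getD_append_right _ _ _ _ (by omega),
      List.getD_append _ _ _ _ (by simp only [List.length_replicate]; omega),
      List.getD_eq_getElem _ _ (by simp only [List.length_replicate]; omega),
      List.getElem_replicate]
  have hge : X.getD (n+r) true = false := by
    rw [hX, List.getD_append_right _ _ _ _ (by omega),
      List.getD_append_right _ _ _ _ (by simp only [List.length_replicate]; omega)]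
    simp [hn]
  have htrlow : ∀ p, p ≤ n → Tr X p = Tr δ p := by
    intro p hp
    unfold Tr
    refine Finset.sum_congr rfl fun k hk => ?_
    rw [Finset.mem_range] at hk
    unfold tb
    rw [hgd k (by omega)]
  unfold Nv
  rw [hlen, ← hn, Finset.range_eq_Ico,
    ← Finset.sum_Ico_consecutive _ (Nat.zero_le n) (by omega : n ≤ n + r + 1),
    ← Finset.sum_Ico_consecutive _ (by omega : n ≤ n + r) (by omega : n + r ≤ n + r + 1)]
  have sing : Finset.Ico (n+r) (n+r+1) = {n+r} := by
    ext y
    simp only [Finset.mem_Ico, Finset.mem_singleton]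
    omega
  rw [sing, Finset.sum_singleton]
  have e1 : ∀ p ∈ Finset.Ico 0 n, zb X p * (Tr X p % 2) = zb δ p * (Tr δ p % 2) := by
    intro p hp
    simp only [Finset.mem_Ico] at hp
    rw [htrlow p (by omega)]
    unfold zb
    rw [hgd p (by omega)]
  have e2 : ∀ p ∈ Finset.Ico n (n+r), zb X p * (Tr X p % 2) = 0 := by
    intro p hp
    simp only [Finset.mem_Ico] at hp
    have : zb X p = 0 := by
      unfold zb
      rw [hgm p (by omega) (by omega)]
      simp
    rw [this, zero_mul]
  have e3 : zb X (n+r) * (Tr X (n+r) % 2) = ((δ.count true) + r) % 2 := by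
    have hz : zb X (n+r) = 1 := zb_one hge
    have htr : Tr X (n+r) = δ.count true + r := by
      rw [Tr_split X (by omega : n ≤ n + r), htrlow n le_rfl]
      have : ∀ k ∈ Finset.Ico n (n+r), tb X k = 1 := by
        intro k hk
        simp only [Finset.mem_Ico] at hk
        exact tb_one (by rw [getD_irrel (by omega) false true]; exact hgm k (by omega) (by omega))
      rw [Finset.sum_congr rfl this, Finset.sum_const, smul_eq_mul, mul_one, Nat.card_Ico]
      have hct : δ.count true = Tr δ n := by rw [count_true_eq, Tr, hn]
      omega
    rw [hz, htr, one_mul]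
  rw [Finset.sum_congr rfl e1, Finset.sum_congr rfl e2, Finset.sum_const_zero, zero_add, e3,
    ← Finset.range_eq_Ico, hn]

lemma bseq_facts {l : List ℕ} (h : l.Pairwise (· ≥ ·)) :
    (bseq l).count true = l.headI ∧
      Nv (bseq l) = l.countP (fun x => decide (x % 2 = 1)) := by
  induction l with
  | nil => constructor <;> simp [bseq, Nv]
  | cons a s ih =>
    rw [List.pairwise_cons] at h
    obtain ⟨ha, hs⟩ := h
    obtain ⟨ihc, ihn⟩ := ih hs
    have hd : s.headI ≤ a := by
      cases s with
      | nil => simp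
      | cons b sb => exact ha b (by simp)
    constructor
    · rw [bseq, List.count_append, List.count_append, ihc, List.count_replicate_self]
      have : [false].count true = 0 := by simp
      rw [this]
      simp only [List.headI_cons]
      omega
    · rw [bseq, List.append_assoc, Nv_append_TF, ihc, ihn, List.countP_cons]
      have : (if (fun x => decide (x % 2 = 1)) a = true then 1 else 0) = a % 2 := by
        have hiff : ((fun x => decide (x % 2 = 1)) a = true) ↔ a % 2 = 1 := by simp
        by_cases h2 : a % 2 = 1
        · rw [if_pos (hiff.mpr h2)]
          omega
        · rw [if_neg (fun hh => h2 (hiff.mp hh))]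
          omega
      rw [this]
      have : s.headI + (a - s.headI) = a := by omega
      rw [this]

lemma sorted_itl_left {d0 d1 : List Bool} {t : ℕ} (h0 : d0.length = t)
    (h : (itl d0 d1 t).Pairwise (· ≤ ·)) : d0.Pairwise (· ≤ ·) := by
  rw [List.pairwise_iff_getElem] at h ⊢
  intro i j hi hj hij
  have h2i : 2*i < (itl d0 d1 t).length := by rw [itl_length]; omega
  have h2j : 2*j < (itl d0 d1 t).length := by rw [itl_length]; omega
  have hh := h (2*i) (2*j) h2i h2j (by omega)
  rw [← List.getD_eq_getElem _ false h2i, ← List.getD_eq_getElem _ false h2j,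
    itl_getD_evenF (by omega), itl_getD_evenF (by omega),
    List.getD_eq_getElem _ _ hi, List.getD_eq_getElem _ _ hj] at hh
  exact hh

lemma sorted_itl_right {d0 d1 : List Bool} {t : ℕ} (h1 : d1.length = t)
    (h : (itl d0 d1 t).Pairwise (· ≤ ·)) : d1.Pairwise (· ≤ ·) := by
  rw [List.pairwise_iff_getElem] at h ⊢
  intro i j hi hj hij
  have h2i : 2*i+1 < (itl d0 d1 t).length := by rw [itl_length]; omega
  have h2j : 2*j+1 < (itl d0 d1 t).length := by rw [itl_length]; omega
  have hh := h (2*i+1) (2*j+1) h2i h2j (by omega)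
  rw [← List.getD_eq_getElem _ false h2i, ← List.getD_eq_getElem _ false h2j,
    itl_getD_oddF (by omega), itl_getD_oddF (by omega),
    List.getD_eq_getElem _ _ hi, List.getD_eq_getElem _ _ hj] at hh
  exact hh

lemma itl_FT {d0 d1 : List Bool} {t i₀ : ℕ} (h0 : d0.length = t) (h1 : d1.length = t)
    (ha0 : AnchorAt d0 i₀) (ha1 : AnchorAt d1 i₀)
    (hs0 : d0.Pairwise (· ≤ ·)) (hs1 : d1.Pairwise (· ≤ ·)) :
    itl d0 d1 t = List.replicate (2 * min i₀ t) false ++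
      List.replicate (2*t - 2 * min i₀ t) true := by
  set a := min i₀ t with hadef
  have hat : a ≤ t := by omega
  have hc0 : d0.count false = a := by rw [anchor_count ha0, h0]
  have hc1 : d1.count false = a := by rw [anchor_count ha1, h1]
  have hct0 : d0.count true = t - a := by
    have := count_split d0
    omega
  have hct1 : d1.count true = t - a := by
    have := count_split d1
    omega
  have hd0 : d0 = List.replicate a false ++ List.replicate (t - a) true := by
    have := sorted_bool_eq hs0
    rw [hc0, hct0] at this
    exact this
  have hd1 : d1 = List.replicate a false ++ List.replicate (t - a) true := by
    have := sorted_bool_eq hs1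
    rw [hc1, hct1] at this
    exact this
  apply List.ext_getElem
  · rw [itl_length]
    simp only [List.length_append, List.length_replicate]
    omega
  intro v hv1 hv2
  rw [itl_length] at hv1
  rw [← List.getD_eq_getElem _ false (by rwa [itl_length]),
    ← List.getD_eq_getElem _ false (by simp only [List.length_append, List.length_replicate]; omega)]
  rw [getD_FT _ (by omega)]
  rcases Nat.even_or_odd v with ⟨k, hk⟩ | ⟨k, hk⟩
  · have hkt : k < t := by omega
    have hk2 : v = 2*k := by omega
    subst hk2
    rw [itl_getD_evenF hkt, hd0, getD_FT _ (by omega)]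
    exact decide_eq_decide.mpr (by omega)
  · have hkt : k < t := by omega
    have hk2 : v = 2*k+1 := by omega
    subst hk2
    rw [itl_getD_oddF hkt, hd1, getD_FT _ (by omega)]
    exact decide_eq_decide.mpr (by omega)

set_option maxHeartbeats 3200000 in
lemma key (μ : List ℕ) : ∀ (d0 d1 : List Bool) (t i₀ : ℕ),
    d0.length = t → d1.length = t → AnchorAt d0 i₀ → AnchorAt d1 i₀ →
    psi2 d0 d1 μ =
      (-1 : ℤ)^(Nv (itl d0 d1 t) / 2) * chiW (itl d0 d1 t) (μ.map (fun x => 2*x)) := by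
  induction μ with
  | nil =>
    intro d0 d1 t i₀ h0 h1 ha0 ha1
    simp only [psi2, chiW, List.map_nil]
    by_cases hs : d0.Pairwise (· ≤ ·) ∧ d1.Pairwise (· ≤ ·)
    · rw [if_pos hs, itl_FT h0 h1 ha0 ha1 hs.1 hs.2, Nv_FT, if_pos (sorted_FT _ _)]
      norm_num
    · rw [if_neg hs]
      by_cases hI : (itl d0 d1 t).Pairwise (· ≤ ·)
      · exact absurd ⟨sorted_itl_left h0 hI, sorted_itl_right h1 hI⟩ hs
      · rw [if_neg hI, mul_zero]
  | cons m rest ih =>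
    intro d0 d1 t i₀ h0 h1 ha0 ha1
    simp only [psi2, List.map_cons, chiW]
    rw [Finset.mul_sum, itl_length, h0, h1,
      sum_parity_split (fun q => (-1 : ℤ)^(Nv (itl d0 d1 t) / 2) *
        (if q + 2*m < 2*t ∧ (itl d0 d1 t).getD q false = true ∧
            (itl d0 d1 t).getD (q + 2*m) true = false then
          (-1 : ℤ) ^ ((((itl d0 d1 t).drop (q + 1)).take (2*m - 1)).count false) *
            chiW (((itl d0 d1 t).set q false).set (q + 2*m) true) (rest.map (fun x => 2*x))
        else 0)) (2*t)]
    have ht1 : (2*t+1)/2 = t := by omega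
    have ht2 : 2*t/2 = t := by omega
    rw [ht1, ht2]
    congr 1
    -- component 0 (even positions)
    · refine Finset.sum_congr rfl fun u hu => ?_
      rw [Finset.mem_range] at hu
      by_cases hc : u + m < t ∧ d0.getD u false = true ∧ d0.getD (u+m) true = false
      · obtain ⟨hc1, hc2, hc3⟩ := hc
        have hm1 : 1 ≤ m := by
          by_contra hm0
          have hza := zb_zero hc2
          have hzb := zb_one (by rw [show u + m = u by omega] at hc3; exact hc3)
          omega
        rw [if_pos ⟨hc1, hc2, hc3⟩, if_pos ⟨by omega,
          by rw [itl_getD_evenF (by omega)]; exact hc2,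
          by rw [show 2*u + 2*m = 2*(u+m) by ring, itl_getD_even h0 (by omega)]; exact hc3⟩]
        have hIH := ih ((d0.set u false).set (u+m) true) d1 t i₀
          (by rw [List.length_set, List.length_set]; exact h0) h1
          (anchor_mv (by omega) (by omega : u + m < d0.length) hc2 hc3 ha0) ha1
        have hmvI : itl ((d0.set u false).set (u+m) true) d1 t =
            ((itl d0 d1 t).set (2*u) false).set (2*u + 2*m) true := by
          have := itl_mv_left (d1 := d1) (u := u) (w := u + m) h0 (by omega) (by omega)
          rw [mv, mv] at this
          rw [this, show 2*(u+m) = 2*u + 2*m by ring]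
        rw [hmvI] at hIH
        rw [hIH]
        have hstep := step_sign (Z := itl d0 d1 t) (q := 2*u) (m := m) hm1
          (by rw [itl_length]; omega)
          (by rw [itl_getD_evenF (by omega)]; exact hc2)
          (by rw [show 2*u + 2*m = 2*(u+m) by ring, itl_getD_even h0 (by omega)]; exact hc3)
        rw [mv] at hstep
        rw [hstep]
        have hcnt : (((itl d0 d1 t).drop (2*u + 1)).take (2*m - 1)).count false =
            ((d0.drop (u+1)).take (m-1)).count false +
              ∑ i ∈ Finset.range m, zb (itl d0 d1 t) (2*u+1+2*i) := by
          rw [count_false_drop_take (by rw [itl_length]; omega),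
            count_false_drop_take (by omega),
            sum_parity_split (fun k => zb (itl d0 d1 t) (2*u+1+k)) (2*m-1)]
          have hm2 : (2*m-1+1)/2 = m := by omega
          have hm3 : (2*m-1)/2 = m-1 := by omega
          rw [hm2, hm3]
          rw [add_comm]
          congr 1
          refine Finset.sum_congr rfl fun i hi => ?_
          rw [Finset.mem_range] at hi
          rw [show 2*u+1+(2*i+1) = 2*(u+1+i) by ring, zb_itl_even h0 (by omega),
            show u+1+i = u+1+i from rfl]
        rw [hcnt, pow_add, pow_add]
        ring
      · rw [if_neg hc, if_neg, mul_zero]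
        rintro ⟨g1, g2, g3⟩
        apply hc
        have hul : u + m < t := by omega
        rw [itl_getD_evenF (by omega)] at g2
        rw [show 2*u + 2*m = 2*(u+m) by ring, itl_getD_even h0 (by omega)] at g3
        exact ⟨hul, g2, g3⟩
    -- component 1 (odd positions)
    · refine Finset.sum_congr rfl fun u hu => ?_
      rw [Finset.mem_range] at hu
      by_cases hc : u + m < t ∧ d1.getD u false = true ∧ d1.getD (u+m) true = false
      · obtain ⟨hc1, hc2, hc3⟩ := hc
        have hm1 : 1 ≤ m := by
          by_contra hm0
          have hza := zb_zero hc2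
          have hzb := zb_one (by rw [show u + m = u by omega] at hc3; exact hc3)
          omega
        rw [if_pos ⟨hc1, hc2, hc3⟩, if_pos ⟨by omega,
          by rw [itl_getD_oddF (by omega)]; exact hc2,
          by rw [show 2*u+1 + 2*m = 2*(u+m)+1 by ring, itl_getD_odd h1 (by omega)]; exact hc3⟩]
        have hIH := ih d0 ((d1.set u false).set (u+m) true) t i₀ h0
          (by rw [List.length_set, List.length_set]; exact h1) ha0
          (anchor_mv (by omega) (by omega : u + m < d1.length) hc2 hc3 ha1)
        have hmvI : itl d0 ((d1.set u false).set (u+m) true) t =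
            ((itl d0 d1 t).set (2*u+1) false).set (2*u+1 + 2*m) true := by
          have := itl_mv_right (d0 := d0) (u := u) (w := u + m) h1 (by omega) (by omega)
          rw [mv, mv] at this
          rw [this, show 2*(u+m)+1 = 2*u+1 + 2*m by ring]
        rw [hmvI] at hIH
        rw [hIH]
        have hstep := step_sign (Z := itl d0 d1 t) (q := 2*u+1) (m := m) hm1
          (by rw [itl_length]; omega)
          (by rw [itl_getD_oddF (by omega)]; exact hc2)
          (by rw [show 2*u+1 + 2*m = 2*(u+m)+1 by ring, itl_getD_odd h1 (by omega)]; exact hc3)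
        rw [mv] at hstep
        rw [hstep]
        have hcnt : (((itl d0 d1 t).drop (2*u+1 + 1)).take (2*m - 1)).count false =
            ((d1.drop (u+1)).take (m-1)).count false +
              ∑ i ∈ Finset.range m, zb (itl d0 d1 t) (2*u+1+1+2*i) := by
          rw [count_false_drop_take (by rw [itl_length]; omega),
            count_false_drop_take (by omega),
            sum_parity_split (fun k => zb (itl d0 d1 t) (2*u+1+1+k)) (2*m-1)]
          have hm2 : (2*m-1+1)/2 = m := by omega
          have hm3 : (2*m-1)/2 = m-1 := by omega
          rw [hm2, hm3]
          rw [add_comm]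
          congr 1
          refine Finset.sum_congr rfl fun i hi => ?_
          rw [Finset.mem_range] at hi
          rw [show 2*u+1+1+(2*i+1) = 2*(u+1+i)+1 by ring, zb_itl_odd h1 (by omega)]
        rw [hcnt, pow_add, pow_add]
        ring
      · rw [if_neg hc, if_neg, mul_zero]
        rintro ⟨g1, g2, g3⟩
        apply hc
        have hul : u + m < t := by omega
        rw [itl_getD_oddF (by omega)] at g2
        rw [show 2*u+1 + 2*m = 2*(u+m)+1 by ring, itl_getD_odd h1 (by omega)] at g3
        exact ⟨hul, g2, g3⟩

end LP


theorem luebeck_prasad_identity_r_two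
    (n : ℕ) (l : List ℕ) (hl : IsPartition l) (hsum : l.sum = 2 * n)
    (hcore : EmptyCore 2 l) (Λ : ℕ → List ℕ) (hΛ : ∀ j < 2, IsPartition (Λ j))
    (hphi : IsPhi 2 Λ l) (μ : List ℕ) (hμ : IsPartition μ) (hμsum : μ.sum = n) :
    psi2 (bseq (Λ 0)) (bseq (Λ 1)) μ =
      (-1 : ℤ) ^ ((l.countP (fun x => decide (x % 2 = 1))) / 2) *
        chiW (bseq l) (μ.map (fun x => 2 * x)) := by
  obtain ⟨t, i₀, s, p, q, hcomp, P, Q, hPQ⟩ := hphi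
  obtain ⟨hs0, hl0, ha0⟩ := hcomp 0 (by omega)
  obtain ⟨hs1, hl1, ha1⟩ := hcomp 1 (by omega)
  have hitl : List.replicate P false ++ bseq l ++ List.replicate Q true = LP.itl (s 0) (s 1) t := by
    rw [hPQ]
    unfold LP.itl
    have hfun : (fun v => (s (v % 2)).getD (v / 2) false) =
        (fun v => (if v % 2 = 0 then s 0 else s 1).getD (v / 2) false) := by
      funext v
      rcases Nat.mod_two_eq_zero_or_one v with h2 | h2
      · simp [h2]
      · simp [h2]
    rw [hfun]
  have hkey := LP.key μ (s 0) (s 1) t i₀ hl0 hl1 ha0 ha1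
  rw [← hitl, LP.Nv_pad, LP.chiW_pad] at hkey
  rw [hs0, hs1, LP.psi2_pad] at hkey
  rw [hkey, (LP.bseq_facts hl.1).2]
end
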